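/- arXiv:1007.3528 — 3 statements merged into one kernel-verified Lean document; each statement's English description precedes it below -/
import Mathlib

section
/- Let G be a locally compact, σ-compact group and let w be an admissible weight on G. Then for every f ∈ W(L¹, L^∞_{1/w}) and g ∈ W(L^∞, L¹_w), the pointwise product f·g is integrable and ∫_G |f(x)||g(x)| dx ≤ C ‖f‖_{W(L¹,L^∞_{1/w})} ‖g‖_{W(L^∞,L¹_w)} for a constant C depending only on V and w. The same holds in the unweighted case: W(L¹,L^∞) · W(L^∞,L¹) ↪ L¹. -/
open MeasureTheory ENNReal Filter Set Pointwise

noncomputable section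

namespace CoorbitCovers

variable {G : Type*}

/-- The group setting: a locally compact, σ-compact group `G` together with a left Haar
measure `μ`, its modular function `Δ`, and a fixed symmetric relatively compact
neighborhood `V` of the identity. -/
structure GroupSetting (G : Type*) [Group G] [TopologicalSpace G] [MeasurableSpace G] where
  μ : Measure G
  haar : μ.IsHaarMeasure
  Δ : G → ℝ
  Δ_pos : ∀ x, 0 < Δ x
  Δ_hom : ∀ x y, Δ (x * y) = Δ x * Δ y
  Δ_spec : ∀ (x : G) (s : Set G), MeasurableSet s →
    μ ((fun y => y * x) '' s) = ENNReal.ofReal (Δ x) * μ s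
  V : Set G
  V_meas : MeasurableSet V
  V_symm : V⁻¹ = V
  V_nhds : V ∈ nhds (1 : G)
  V_relCompact : IsCompact (closure V)

variable [Group G] [TopologicalSpace G] [IsTopologicalGroup G]
  [LocallyCompactSpace G] [SigmaCompactSpace G] [MeasurableSpace G] [BorelSpace G]

/-- `enn f x = ‖f x‖` as an extended nonnegative real. -/
def enn (f : G → ℂ) : G → ℝ≥0∞ := fun x => (‖f x‖₊ : ℝ≥0∞)

/-- Convolution of two extended-nonnegative functions: `f*g(x) = ∫ f(y) g(y⁻¹x) dy`. -/
def convE (GS : GroupSetting G) (f g : G → ℝ≥0∞) : G → ℝ≥0∞ :=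
  fun x => ∫⁻ y, f y * g (y⁻¹ * x) ∂GS.μ

/-- Convolution of two complex functions: `f*g(x) = ∫ f(y) g(y⁻¹x) dy`. -/
def convC (GS : GroupSetting G) (f g : G → ℂ) : G → ℂ :=
  fun x => ∫ y, f y * g (y⁻¹ * x) ∂GS.μ

/-- The `L²`-type pairing `⟨f,h⟩ = ∫ f(x) conj (h(x)) dx`. -/
def pairing (GS : GroupSetting G) (f h : G → ℂ) : ℂ :=
  ∫ x, f x * (starRingEnd ℂ) (h x) ∂GS.μ

/-- The left local maximum function `f^#(x) = esssup_{y ∈ V} f(xy)`. -/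
def sharpL (GS : GroupSetting G) (f : G → ℝ≥0∞) : G → ℝ≥0∞ :=
  fun x => essSup (fun y => f (x * y)) (GS.μ.restrict GS.V)

/-- The right local maximum function `f_#(x) = esssup_{y ∈ V} f(yx)`. -/
def sharpR (GS : GroupSetting G) (f : G → ℝ≥0∞) : G → ℝ≥0∞ :=
  fun x => essSup (fun y => f (y * x)) (GS.μ.restrict GS.V)

/-- The norm of `L¹_w`: `∫ f(x) w(x) dx`. -/
def L1wNorm (GS : GroupSetting G) (w : G → ℝ) (f : G → ℝ≥0∞) : ℝ≥0∞ :=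
  ∫⁻ x, f x * ENNReal.ofReal (w x) ∂GS.μ

/-- The norm of `L^∞`. -/
def LinfNorm (GS : GroupSetting G) (f : G → ℝ≥0∞) : ℝ≥0∞ := essSup f GS.μ

/-- The norm of `L^∞_{1/w}`: `esssup f(x)/w(x)`. -/
def LinfwInvNorm (GS : GroupSetting G) (w : G → ℝ) (f : G → ℝ≥0∞) : ℝ≥0∞ :=
  essSup (fun x => f x / ENNReal.ofReal (w x)) GS.μ

/-- The norm of the amalgam space `W(L^∞, L¹_w)`, namely `‖f^#‖_{L¹_w}`. -/
def W_Linf_L1w (GS : GroupSetting G) (w : G → ℝ) (f : G → ℝ≥0∞) : ℝ≥0∞ :=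
  L1wNorm GS w (sharpL GS f)

/-- The norm of the right amalgam space `W_R(L^∞, L¹_w)`, namely `‖f_#‖_{L¹_w}`. -/
def WR_Linf_L1w (GS : GroupSetting G) (w : G → ℝ) (f : G → ℝ≥0∞) : ℝ≥0∞ :=
  L1wNorm GS w (sharpR GS f)

/-- The norm of the unweighted amalgam space `W(L^∞, L¹)`. -/
def W_Linf_L1 (GS : GroupSetting G) (f : G → ℝ≥0∞) : ℝ≥0∞ := ∫⁻ x, sharpL GS f x ∂GS.μ

/-- The norm of the unweighted right amalgam space `W_R(L^∞, L¹)`. -/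
def WR_Linf_L1 (GS : GroupSetting G) (f : G → ℝ≥0∞) : ℝ≥0∞ := ∫⁻ x, sharpR GS f x ∂GS.μ

/-- The norm of `W(L¹, L^∞_{1/w})`: `esssup_x ‖f χ_{xV}‖_{L¹} / w(x)`. -/
def W_L1_Linfw (GS : GroupSetting G) (w : G → ℝ) (f : G → ℝ≥0∞) : ℝ≥0∞ :=
  essSup (fun x => (∫⁻ y in x • GS.V, f y ∂GS.μ) / ENNReal.ofReal (w x)) GS.μ

/-- The norm of the unweighted `W(L¹, L^∞)`. -/
def W_L1_Linf (GS : GroupSetting G) (f : G → ℝ≥0∞) : ℝ≥0∞ :=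
  essSup (fun x => ∫⁻ y in x • GS.V, f y ∂GS.μ) GS.μ

/-- The characteristic function of `V`, with values in `ℝ≥0∞`. -/
def chiV (GS : GroupSetting G) : G → ℝ≥0∞ := GS.V.indicator 1

/-- The norm of the left weak amalgam space `W^weak(L^∞,L¹_w)`: `‖χ_V * f‖_{W(L^∞,L¹_w)}`. -/
def Wweak_Linf_L1w (GS : GroupSetting G) (w : G → ℝ) (f : G → ℝ≥0∞) : ℝ≥0∞ :=
  W_Linf_L1w GS w (convE GS (chiV GS) f)

/-- The norm of the right weak amalgam space `W_R^weak(L^∞,L¹_w)`: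
`‖f * χ_V‖_{W_R(L^∞,L¹_w)}`. -/
def WRweak_Linf_L1w (GS : GroupSetting G) (w : G → ℝ) (f : G → ℝ≥0∞) : ℝ≥0∞ :=
  WR_Linf_L1w GS w (convE GS f (chiV GS))

/-- The norm of the strong amalgam space `W^st(L^∞,L¹_w) = W_R(L^∞, W(L^∞,L¹_w))`:
`‖(f_#)^#‖_{L¹_w}`. -/
def Wst_Linf_L1w (GS : GroupSetting G) (w : G → ℝ) (f : G → ℝ≥0∞) : ℝ≥0∞ :=
  L1wNorm GS w (sharpL GS (sharpR GS f))

/-- A solid BF space on `G`, modelled by its (solid) function norm `N` acting on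
extended-nonnegative functions. The norm of a complex function `f` is `N (enn f)`.
The fields record: solidity (monotonicity), the norm axioms, nondegeneracy,
the continuous embedding into `L¹_loc`, and completeness (Banach). -/
structure BFSpace (GS : GroupSetting G) where
  N : (G → ℝ≥0∞) → ℝ≥0∞
  mono : ∀ f g : G → ℝ≥0∞, (∀ᵐ x ∂GS.μ, f x ≤ g x) → N f ≤ N g
  add_le : ∀ f g : G → ℝ≥0∞, N (fun x => f x + g x) ≤ N f + N g
  smul_eq : ∀ (c : ℝ≥0∞) (f : G → ℝ≥0∞), N (fun x => c * f x) = c * N f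
  eq_zero : ∀ f : G → ℝ≥0∞, Measurable f → N f = 0 → f =ᵐ[GS.μ] 0
  loc_embed : ∀ K : Set G, IsCompact K → ∃ C : ℝ≥0∞, C ≠ ⊤ ∧
      ∀ f : G → ℝ≥0∞, Measurable f → (∫⁻ x in K, f x ∂GS.μ) ≤ C * N f
  complete : ∀ u : ℕ → G → ℂ, (∀ n, AEStronglyMeasurable (u n) GS.μ) →
      (∀ n, N (enn (u n)) ≠ ⊤) →
      (∀ ε : ℝ≥0∞, 0 < ε → ∃ n₀ : ℕ, ∀ m ≥ n₀, ∀ n ≥ n₀,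
          N (enn (fun x => u m x - u n x)) < ε) →
      ∃ f : G → ℂ, AEStronglyMeasurable f GS.μ ∧ N (enn f) ≠ ⊤ ∧
        Tendsto (fun n => N (enn (fun x => u n x - f x))) atTop (nhds 0)

/-- Membership in a BF space. -/
def BFSpace.Mem {GS : GroupSetting G} (E : BFSpace GS) (f : G → ℂ) : Prop :=
  AEStronglyMeasurable f GS.μ ∧ E.N (enn f) ≠ ⊤

/-- The norm of the amalgam space `W(L^∞, E)`, namely `‖f^#‖_E`. -/
def W_Linf_E (GS : GroupSetting G) (E : BFSpace GS) (f : G → ℝ≥0∞) : ℝ≥0∞ :=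
  E.N (sharpL GS f)

/-- A BF space is translation invariant when left and right translations act boundedly
on it. -/
structure IsTI (GS : GroupSetting G) (E : BFSpace GS) : Prop where
  left : ∀ x : G, ∃ C : ℝ≥0∞, C ≠ ⊤ ∧ ∀ f, E.N (fun y => f (x⁻¹ * y)) ≤ C * E.N f
  right : ∀ x : G, ∃ C : ℝ≥0∞, C ≠ ⊤ ∧ ∀ f, E.N (fun y => f (y * x)) ≤ C * E.N f

/-- An admissible weight on `G`: locally bounded, positive, `w(x) = Δ(x⁻¹) w(x⁻¹)`
and submultiplicative. -/
structure IsAdmissibleWeight (GS : GroupSetting G) (w : G → ℝ) : Prop where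
  pos : ∀ x, 0 < w x
  locBdd : ∀ K : Set G, IsCompact K → ∃ M : ℝ, ∀ x ∈ K, w x ≤ M
  delta_rel : ∀ x, w x = GS.Δ x⁻¹ * w x⁻¹
  submul : ∀ x y, w (x * y) ≤ w x * w y

/-- `w` is an admissible weight for the solid translation invariant BF space `E`, with
admissibility constant `C`: the weight dominates (with constant `C`) the operator norms
of left and right translations, and `E` is an `L¹_w`-convolution module on both sides. -/
structure IsAdmissibleFor (GS : GroupSetting G) (w : G → ℝ) (E : BFSpace GS) (C : ℝ) :
    Prop where
  adm : IsAdmissibleWeight GS w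
  C_pos : 0 < C
  transL : ∀ (x : G) (f : G → ℝ≥0∞),
      E.N (fun y => f (x⁻¹ * y)) ≤ ENNReal.ofReal (w x / C) * E.N f
  transL' : ∀ (x : G) (f : G → ℝ≥0∞),
      E.N (fun y => f (x * y)) ≤ ENNReal.ofReal (w x / C) * E.N f
  transR : ∀ (x : G) (f : G → ℝ≥0∞),
      E.N (fun y => f (y * x)) ≤ ENNReal.ofReal (w x / C) * E.N f
  transR' : ∀ (x : G) (f : G → ℝ≥0∞),
      E.N (fun y => f (y * x⁻¹)) ≤ ENNReal.ofReal (GS.Δ x * (w x / C)) * E.N f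
  convL : ∀ g f : G → ℝ≥0∞,
      E.N (convE GS g f) ≤ ENNReal.ofReal (1 / C) * L1wNorm GS w g * E.N f
  convR : ∀ f g : G → ℝ≥0∞,
      E.N (convE GS f g) ≤ ENNReal.ofReal (1 / C) * E.N f * L1wNorm GS w g

/-- `Λ` is relatively separated with spreadness (at most) `n`:
every left translate of `V` contains at most `n` points of `Λ`. -/
def RelSep (GS : GroupSetting G) (Λ : Set G) (n : ℕ) : Prop :=
  ∀ x : G, (Λ ∩ x • GS.V).encard ≤ (n : ℕ∞)

/-- The norm of the discrete space `E_d(Λ)`: `‖Σ_λ |c_λ| χ_{λV}‖_E`. -/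
def EdNorm (GS : GroupSetting G) (E : BFSpace GS) (Λ : Set G) (c : Λ → ℂ) : ℝ≥0∞ :=
  E.N (fun x => ∑' l : Λ, ((l : G) • GS.V).indicator (fun _ => (‖c l‖₊ : ℝ≥0∞)) x)

/-- The norm of the `B`-valued discrete space `E_{d,B}(Λ)`:
`‖Σ_λ ‖c_λ‖_B χ_{λV}‖_E`. -/
def EdBNorm (GS : GroupSetting G) (E B : BFSpace GS) (Λ : Set G) (c : Λ → G → ℂ) : ℝ≥0∞ :=
  E.N (fun x => ∑' l : Λ, ((l : G) • GS.V).indicator (fun _ => B.N (enn (c l))) x)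


private lemma smul_set_eq_preimage (y : G) (V : Set G) :
    y • V = (fun x => y⁻¹ * x) ⁻¹' V := by
  ext x
  simp [Set.mem_smul_set_iff_inv_smul_mem, smul_eq_mul]

private lemma meas_smul {V : Set G} (hV : MeasurableSet V) (y : G) :
    MeasurableSet (y • V) := by
  rw [smul_set_eq_preimage]
  exact hV.preimage (measurable_const_mul y⁻¹)

/-- Existence of a countable cover of `G` by translates `z i • U` of a measurable set `U`
of positive finite measure such that `U⁻¹ * U ⊆ V`. -/
private lemma exists_good_cover (GS : GroupSetting G) :
    ∃ (U : Set G) (z : ℕ → G), MeasurableSet U ∧ GS.μ U ≠ 0 ∧ GS.μ U ≠ ⊤ ∧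
      (∀ a ∈ U, ∀ b ∈ U, a⁻¹ * b ∈ GS.V) ∧ ∀ x : G, ∃ i, x ∈ z i • U := by
  haveI := GS.haar
  obtain ⟨W, hW, hWs⟩ := exists_nhds_split_inv GS.V_nhds
  set U : Set G := interior (W ∩ W⁻¹) with hUdef
  have hUo : IsOpen U := isOpen_interior
  have hWinv : W⁻¹ ∈ nhds (1 : G) := by
    have : (Inv.inv : G → G) ⁻¹' W ∈ nhds (1 : G) :=
      (continuous_inv.continuousAt (x := (1 : G))).preimage_mem_nhds (by simpa using hW)
    simpa [Set.inv_preimage] using this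
  have hU1 : (1 : G) ∈ U := by
    rw [hUdef, mem_interior_iff_mem_nhds]
    exact Filter.inter_mem hW hWinv
  have hUsub : ∀ a ∈ U, ∀ b ∈ U, a⁻¹ * b ∈ GS.V := by
    intro a ha b hb
    have ha' : a ∈ W ∩ W⁻¹ := interior_subset ha
    have hb' : b ∈ W ∩ W⁻¹ := interior_subset hb
    have h1 : a⁻¹ ∈ W := Set.mem_inv.1 ha'.2
    have h2 : b⁻¹ ∈ W := Set.mem_inv.1 hb'.2
    have := hWs a⁻¹ h1 b⁻¹ h2
    simpa [div_eq_mul_inv] using this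
  have hUV : U ⊆ GS.V := by
    intro b hb
    have := hUsub 1 hU1 b hb
    simpa using this
  have hμ0 : GS.μ U ≠ 0 := (hUo.measure_pos GS.μ ⟨1, hU1⟩).ne'
  have hμt : GS.μ U ≠ ⊤ :=
    ((measure_mono (hUV.trans subset_closure)).trans_lt GS.V_relCompact.measure_lt_top).ne
  obtain ⟨z, hz⟩ := isLindelof_univ.indexed_countable_subcover (fun g : G => g • U)
    (fun g => hUo.smul g) (by
      intro x _
      exact Set.mem_iUnion.2 ⟨x, ⟨1, hU1, by simp⟩⟩)
  refine ⟨U, z, hUo.measurableSet, hμ0, hμt, hUsub, fun x => ?_⟩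
  rcases Set.mem_iUnion.1 (hz (Set.mem_univ x)) with ⟨i, hi⟩
  exact ⟨i, hi⟩

private lemma key_est (GS : GroupSetting G) {φ ψ : G → ℝ≥0∞} (hφ : Measurable φ)
    (hψ : Measurable ψ) (u : G → ℝ≥0∞) (A : ℝ≥0∞) (hAtop : A ≠ ⊤)
    (hA : ∀ᵐ y ∂GS.μ, (∫⁻ x in y • GS.V, φ x ∂GS.μ) ≤ A * u y)
    (U : Set G) (hUm : MeasurableSet U)
    (hUsub : ∀ a ∈ U, ∀ b ∈ U, a⁻¹ * b ∈ GS.V)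
    (z : ℕ → G) (hcov : ∀ x : G, ∃ i, x ∈ z i • U) :
    GS.μ U * ∫⁻ x, φ x * ψ x ∂GS.μ ≤ A * ∫⁻ y, sharpL GS ψ y * u y ∂GS.μ := by
  haveI := GS.haar
  set S : Set (G × G) := ⋃ i, (z i • U) ×ˢ (z i • U) with hSdef
  have hSm : MeasurableSet S :=
    MeasurableSet.iUnion fun i => (meas_smul hUm _).prod (meas_smul hUm _)
  have hμtrans : ∀ y : G, GS.μ (y • U) = GS.μ U := fun y => by
    rw [smul_set_eq_preimage]; exact measure_preimage_mul GS.μ y⁻¹ U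
  -- pointwise lower bound for the kernel integral
  have hlow : ∀ x : G, GS.μ U ≤ ∫⁻ y, S.indicator (fun _ => (1 : ℝ≥0∞)) (y, x) ∂GS.μ := by
    intro x
    obtain ⟨i, hi⟩ := hcov x
    have hle : ∀ y : G, (z i • U).indicator (fun _ => (1 : ℝ≥0∞)) y
        ≤ S.indicator (fun _ => (1 : ℝ≥0∞)) (y, x) := by
      intro y
      by_cases hy : y ∈ z i • U
      · have hmem : (y, x) ∈ S := Set.mem_iUnion.2 ⟨i, Set.mk_mem_prod hy hi⟩
        simp [Set.indicator_of_mem hy, Set.indicator_of_mem hmem]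
      · simp [Set.indicator_of_notMem hy]
    calc GS.μ U = GS.μ (z i • U) := (hμtrans _).symm
      _ = ∫⁻ y, (z i • U).indicator (fun _ => (1 : ℝ≥0∞)) y ∂GS.μ := by
          rw [lintegral_indicator (meas_smul hUm _)]; simp
      _ ≤ _ := lintegral_mono hle
  -- the kernel is dominated by the indicator of `y • V`
  have hupper : ∀ y x : G, S.indicator (fun _ => (1 : ℝ≥0∞)) (y, x) * (φ x * ψ x)
      ≤ (y • GS.V).indicator (fun x => φ x * ψ x) x := by
    intro y x
    by_cases h : (y, x) ∈ S
    · obtain ⟨i, hi⟩ := Set.mem_iUnion.1 h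
      have hy' : (z i)⁻¹ * y ∈ U := by
        have := hi.1; rwa [smul_set_eq_preimage] at this
      have hx' : (z i)⁻¹ * x ∈ U := by
        have := hi.2; rwa [smul_set_eq_preimage] at this
      have hmem : x ∈ y • GS.V := by
        rw [smul_set_eq_preimage]
        have h1 := hUsub _ hy' _ hx'
        have h2 : ((z i)⁻¹ * y)⁻¹ * ((z i)⁻¹ * x) = y⁻¹ * x := by group
        rwa [h2] at h1
      simp [Set.indicator_of_mem h, Set.indicator_of_mem hmem]
    · simp [Set.indicator_of_notMem h]
  -- Tonelli (for a product-measurable kernel)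
  have hswap : (∫⁻ x, (∫⁻ y, S.indicator (fun _ => (1 : ℝ≥0∞)) (y, x) ∂GS.μ) * (φ x * ψ x) ∂GS.μ)
      ≤ ∫⁻ y, ∫⁻ x in y • GS.V, φ x * ψ x ∂GS.μ ∂GS.μ := by
    have hm : Measurable fun p : G × G =>
        S.indicator (fun _ => (1 : ℝ≥0∞)) (p.2, p.1) * (φ p.1 * ψ p.1) :=
      ((measurable_const.indicator hSm).comp (measurable_snd.prodMk measurable_fst)).mul
        ((hφ.comp measurable_fst).mul (hψ.comp measurable_fst))
    have e : ∀ x : G, (∫⁻ y, S.indicator (fun _ => (1 : ℝ≥0∞)) (y, x) ∂GS.μ) * (φ x * ψ x)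
        = ∫⁻ y, S.indicator (fun _ => (1 : ℝ≥0∞)) (y, x) * (φ x * ψ x) ∂GS.μ := fun x =>
      (lintegral_mul_const _
        (show Measurable fun y : G => S.indicator (fun _ => (1 : ℝ≥0∞)) (y, x) from
          (measurable_const.indicator hSm).comp measurable_prodMk_right)).symm
    calc (∫⁻ x, (∫⁻ y, S.indicator (fun _ => (1 : ℝ≥0∞)) (y, x) ∂GS.μ) * (φ x * ψ x) ∂GS.μ)
        = ∫⁻ x, ∫⁻ y, S.indicator (fun _ => (1 : ℝ≥0∞)) (y, x) * (φ x * ψ x) ∂GS.μ ∂GS.μ :=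
          lintegral_congr e
      _ = ∫⁻ y, ∫⁻ x, S.indicator (fun _ => (1 : ℝ≥0∞)) (y, x) * (φ x * ψ x) ∂GS.μ ∂GS.μ :=
          lintegral_lintegral_swap hm.aemeasurable
      _ ≤ ∫⁻ y, ∫⁻ x in y • GS.V, φ x * ψ x ∂GS.μ ∂GS.μ := by
          refine lintegral_mono fun y => ?_
          rw [← lintegral_indicator (meas_smul GS.V_meas y)]
          exact lintegral_mono fun x => hupper y x
  -- bound each local integral
  have step2 : ∀ᵐ y ∂GS.μ, (∫⁻ x in y • GS.V, φ x * ψ x ∂GS.μ)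
      ≤ A * (sharpL GS ψ y * u y) := by
    filter_upwards [hA] with y hy
    have hmp := measurePreserving_mul_left GS.μ y
    have hpre : (fun v => y * v) ⁻¹' (y • GS.V) = GS.V := by
      ext v
      simp [smul_set_eq_preimage, Set.mem_preimage]
    have e1 : (∫⁻ x in y • GS.V, φ x * ψ x ∂GS.μ)
        = ∫⁻ v in GS.V, φ (y * v) * ψ (y * v) ∂GS.μ := by
      rw [← hmp.setLIntegral_comp_preimage (meas_smul GS.V_meas y) (show Measurable (fun x => φ x * ψ x) from hφ.mul hψ), hpre]
    have e2 : (∫⁻ x in y • GS.V, φ x ∂GS.μ)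
        = ∫⁻ v in GS.V, φ (y * v) ∂GS.μ := by
      rw [← hmp.setLIntegral_comp_preimage (meas_smul GS.V_meas y) hφ, hpre]
    have hb : ∀ᵐ v ∂GS.μ.restrict GS.V,
        φ (y * v) * ψ (y * v) ≤ sharpL GS ψ y * φ (y * v) := by
      filter_upwards [ae_le_essSup (fun v => ψ (y * v)) (μ := GS.μ.restrict GS.V)] with v hv
      calc φ (y * v) * ψ (y * v) ≤ φ (y * v) * sharpL GS ψ y := mul_le_mul_right hv _
        _ = sharpL GS ψ y * φ (y * v) := mul_comm _ _
    calc (∫⁻ x in y • GS.V, φ x * ψ x ∂GS.μ)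
        = ∫⁻ v in GS.V, φ (y * v) * ψ (y * v) ∂GS.μ := e1
      _ ≤ ∫⁻ v in GS.V, sharpL GS ψ y * φ (y * v) ∂GS.μ := lintegral_mono_ae hb
      _ = sharpL GS ψ y * ∫⁻ v in GS.V, φ (y * v) ∂GS.μ :=
            lintegral_const_mul _ (hφ.comp (measurable_const_mul y))
      _ = sharpL GS ψ y * ∫⁻ x in y • GS.V, φ x ∂GS.μ := by rw [e2]
      _ ≤ sharpL GS ψ y * (A * u y) := mul_le_mul_right hy _
      _ = A * (sharpL GS ψ y * u y) := by ring
  calc GS.μ U * ∫⁻ x, φ x * ψ x ∂GS.μ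
      = ∫⁻ x, GS.μ U * (φ x * ψ x) ∂GS.μ := (lintegral_const_mul _ (hφ.mul hψ)).symm
    _ ≤ ∫⁻ x, (∫⁻ y, S.indicator (fun _ => (1 : ℝ≥0∞)) (y, x) ∂GS.μ) * (φ x * ψ x) ∂GS.μ :=
        lintegral_mono fun x => mul_le_mul_left (hlow x) _
    _ ≤ ∫⁻ y, ∫⁻ x in y • GS.V, φ x * ψ x ∂GS.μ ∂GS.μ := hswap
    _ ≤ ∫⁻ y, A * (sharpL GS ψ y * u y) ∂GS.μ := lintegral_mono_ae step2
    _ = A * ∫⁻ y, sharpL GS ψ y * u y ∂GS.μ := lintegral_const_mul' _ _ hAtop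

private lemma main_est (GS : GroupSetting G) {f g : G → ℂ}
    (hf : AEStronglyMeasurable f GS.μ) (hg : AEStronglyMeasurable g GS.μ)
    (u : G → ℝ≥0∞) (A : ℝ≥0∞) (hAtop : A ≠ ⊤)
    (hAbd : ∀ᵐ y ∂GS.μ, (∫⁻ x in y • GS.V, enn f x ∂GS.μ) ≤ A * u y)
    (U : Set G) (hUm : MeasurableSet U) (hU0 : GS.μ U ≠ 0) (hUt : GS.μ U ≠ ⊤)
    (hUsub : ∀ a ∈ U, ∀ b ∈ U, a⁻¹ * b ∈ GS.V)
    (z : ℕ → G) (hcov : ∀ x : G, ∃ i, x ∈ z i • U) :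
    (∫⁻ x, enn f x * enn g x ∂GS.μ) ≤
      (GS.μ U)⁻¹ * A * ∫⁻ y, sharpL GS (enn g) y * u y ∂GS.μ := by
  haveI := GS.haar
  -- measurable representatives
  have hφa : AEMeasurable (enn f) GS.μ := hf.enorm
  have hψa : AEMeasurable (enn g) GS.μ := hg.enorm
  set φ := hφa.mk (enn f) with hφdef
  set ψ := hψa.mk (enn g) with hψdef
  have hφm : Measurable φ := hφa.measurable_mk
  have hψm : Measurable ψ := hψa.measurable_mk
  have hfe : enn f =ᵐ[GS.μ] φ := hφa.ae_eq_mk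
  have hge : enn g =ᵐ[GS.μ] ψ := hψa.ae_eq_mk
  have hint : (∫⁻ x, enn f x * enn g x ∂GS.μ) = ∫⁻ x, φ x * ψ x ∂GS.μ :=
    lintegral_congr_ae (hfe.mul hge)
  have hAbd' : ∀ᵐ y ∂GS.μ, (∫⁻ x in y • GS.V, φ x ∂GS.μ) ≤ A * u y := by
    filter_upwards [hAbd] with y hy
    have : (∫⁻ x in y • GS.V, φ x ∂GS.μ) = ∫⁻ x in y • GS.V, enn f x ∂GS.μ :=
      lintegral_congr_ae (ae_restrict_of_ae hfe.symm)
    rwa [this]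
  have hsharp : ∀ y : G, sharpL GS ψ y = sharpL GS (enn g) y := by
    intro y
    have hcomp : (fun v => enn g (y * v)) =ᵐ[GS.μ] fun v => ψ (y * v) :=
      (measurePreserving_mul_left GS.μ y).quasiMeasurePreserving.ae_eq hge
    exact (essSup_congr_ae (ae_restrict_of_ae hcomp)).symm
  have hkey := key_est GS hφm hψm u A hAtop hAbd' U hUm hUsub z hcov
  have hS : (∫⁻ y, sharpL GS ψ y * u y ∂GS.μ)
      = ∫⁻ y, sharpL GS (enn g) y * u y ∂GS.μ :=
    lintegral_congr fun y => by rw [hsharp y]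
  rw [hint]
  calc (∫⁻ x, φ x * ψ x ∂GS.μ)
      = (GS.μ U)⁻¹ * (GS.μ U * ∫⁻ x, φ x * ψ x ∂GS.μ) := by
        rw [← mul_assoc, ENNReal.inv_mul_cancel hU0 hUt, one_mul]
    _ ≤ (GS.μ U)⁻¹ * (A * ∫⁻ y, sharpL GS ψ y * u y ∂GS.μ) := mul_le_mul_right hkey _
    _ = (GS.μ U)⁻¹ * A * ∫⁻ y, sharpL GS (enn g) y * u y ∂GS.μ := by
        rw [hS, mul_assoc]

/-- Hölder-type estimate for amalgam spaces:
`W(L¹,L^∞_{1/w}) · W(L^∞,L¹_w) ↪ L¹`, with a constant depending only on `V` and `w`;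
the same holds in the unweighted case `W(L¹,L^∞) · W(L^∞,L¹) ↪ L¹`. -/
theorem statement1 (GS : GroupSetting G) (w : G → ℝ) (hw : IsAdmissibleWeight GS w) :
    ∃ C : ℝ≥0∞, C ≠ ⊤ ∧
      (∀ f g : G → ℂ, AEStronglyMeasurable f GS.μ → AEStronglyMeasurable g GS.μ →
        W_L1_Linfw GS w (enn f) ≠ ⊤ → W_Linf_L1w GS w (enn g) ≠ ⊤ →
        Integrable (fun x => f x * g x) GS.μ ∧
        (∫⁻ x, enn f x * enn g x ∂GS.μ) ≤
          C * W_L1_Linfw GS w (enn f) * W_Linf_L1w GS w (enn g)) ∧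
      (∀ f g : G → ℂ, AEStronglyMeasurable f GS.μ → AEStronglyMeasurable g GS.μ →
        W_L1_Linf GS (enn f) ≠ ⊤ → W_Linf_L1 GS (enn g) ≠ ⊤ →
        Integrable (fun x => f x * g x) GS.μ ∧
        (∫⁻ x, enn f x * enn g x ∂GS.μ) ≤
          C * W_L1_Linf GS (enn f) * W_Linf_L1 GS (enn g)) := by
  haveI := GS.haar
  obtain ⟨U, z, hUm, hU0, hUt, hUsub, hcov⟩ := exists_good_cover GS
  refine ⟨(GS.μ U)⁻¹, ENNReal.inv_ne_top.2 hU0, ?_, ?_⟩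
  · intro f g hf hg hfA hgB
    have hAbd : ∀ᵐ y ∂GS.μ, (∫⁻ x in y • GS.V, enn f x ∂GS.μ)
        ≤ W_L1_Linfw GS w (enn f) * ENNReal.ofReal (w y) := by
      filter_upwards [ae_le_essSup
        (fun x => (∫⁻ y in x • GS.V, enn f y ∂GS.μ) / ENNReal.ofReal (w x))
        (μ := GS.μ)] with y hy
      have hw0 : ENNReal.ofReal (w y) ≠ 0 :=
        (ENNReal.ofReal_pos.2 (hw.pos y)).ne'
      exact (ENNReal.div_le_iff_le_mul (Or.inl hw0)
        (Or.inl ENNReal.ofReal_ne_top)).1 hy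
    have hle := main_est GS hf hg (fun y => ENNReal.ofReal (w y))
      (W_L1_Linfw GS w (enn f)) hfA hAbd U hUm hU0 hUt hUsub z hcov
    have hB : (∫⁻ y, sharpL GS (enn g) y * ENNReal.ofReal (w y) ∂GS.μ)
        = W_Linf_L1w GS w (enn g) := rfl
    rw [hB] at hle
    refine ⟨⟨hf.mul hg, ?_⟩, hle⟩
    have heq : (∫⁻ x, (‖f x * g x‖₊ : ℝ≥0∞) ∂GS.μ) = ∫⁻ x, enn f x * enn g x ∂GS.μ := by
      refine lintegral_congr fun x => ?_
      simp [enn, nnnorm_mul, ENNReal.coe_mul]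
    rw [HasFiniteIntegral]; simp only [enorm_eq_nnnorm]; rw [heq]
    exact hle.trans_lt (ENNReal.mul_lt_top
      (ENNReal.mul_ne_top (ENNReal.inv_ne_top.2 hU0) hfA).lt_top hgB.lt_top)
  · intro f g hf hg hfA hgB
    have hAbd : ∀ᵐ y ∂GS.μ, (∫⁻ x in y • GS.V, enn f x ∂GS.μ)
        ≤ W_L1_Linf GS (enn f) * (1 : ℝ≥0∞) := by
      filter_upwards [ae_le_essSup
        (fun x => ∫⁻ y in x • GS.V, enn f y ∂GS.μ) (μ := GS.μ)] with y hy
      simpa [W_L1_Linf] using hy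
    have hle := main_est GS hf hg (fun _ => (1 : ℝ≥0∞)) (W_L1_Linf GS (enn f)) hfA hAbd
      U hUm hU0 hUt hUsub z hcov
    have hB : (∫⁻ y, sharpL GS (enn g) y * (1 : ℝ≥0∞) ∂GS.μ)
        = W_Linf_L1 GS (enn g) := by
      simp [W_Linf_L1]
    rw [hB] at hle
    refine ⟨⟨hf.mul hg, ?_⟩, hle⟩
    have heq : (∫⁻ x, (‖f x * g x‖₊ : ℝ≥0∞) ∂GS.μ) = ∫⁻ x, enn f x * enn g x ∂GS.μ := by
      refine lintegral_congr fun x => ?_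
      simp [enn, nnnorm_mul, ENNReal.coe_mul]
    rw [HasFiniteIntegral]; simp only [enorm_eq_nnnorm]; rw [heq]
    exact hle.trans_lt (ENNReal.mul_lt_top
      (ENNReal.mul_ne_top (ENNReal.inv_ne_top.2 hU0) hfA).lt_top hgB.lt_top)

end CoorbitCovers
end
end

section
/- Let G be a locally compact, σ-compact group, let E be a solid, translation invariant BF space on G, let w be an admissible weight for E, and let Λ ⊆ G be a relatively separated set. Then for every f ∈ E and every continuous g ∈ W_R(C₀, L¹_w), the sequence (⟨f, L_λ g⟩)_{λ∈Λ} belongs to E_d(Λ) and ‖(⟨f, L_λ g⟩)_λ‖_{E_d} ≤ C ‖f‖_E ‖g‖_{W_R(L^∞,L¹_w)}, where ⟨f,h⟩ = ∫_G f(x) \overline{h(x)} dx and C depends only on ρ(Λ), w and the admissibility constant of w for E. -/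
open MeasureTheory ENNReal Filter Set Pointwise

noncomputable section

namespace CoorbitCovers

variable {G : Type*}

variable [Group G] [TopologicalSpace G] [IsTopologicalGroup G]
  [LocallyCompactSpace G] [SigmaCompactSpace G] [MeasurableSpace G] [BorelSpace G]

/-! ### Auxiliary lemmas for the proof of Statement 4 -/

section Aux
set_option linter.unusedSectionVars false

variable (GS : GroupSetting G)

lemma GS_Δ_one : GS.Δ 1 = 1 := by
  have h := GS.Δ_hom 1 1
  rw [mul_one] at h
  have h2 : GS.Δ 1 * 1 = GS.Δ 1 * GS.Δ 1 := by rw [mul_one]; exact h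
  exact (mul_left_cancel₀ (GS.Δ_pos 1).ne' h2).symm

lemma GS_Δ_inv (x : G) : GS.Δ x * GS.Δ x⁻¹ = 1 := by
  rw [← GS.Δ_hom]
  simp [GS_Δ_one]

lemma GS_ofReal_Δ_inv (x : G) :
    ENNReal.ofReal (GS.Δ x) * ENNReal.ofReal (GS.Δ x⁻¹) = 1 := by
  rw [← ENNReal.ofReal_mul (GS.Δ_pos x).le, GS_Δ_inv, ENNReal.ofReal_one]

lemma GS_map_mul_right (x : G) :
    Measure.map (fun y => y * x) GS.μ = ENNReal.ofReal (GS.Δ x⁻¹) • GS.μ := by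
  ext A hA
  rw [Measure.map_apply (measurable_mul_const x) hA, Measure.smul_apply, smul_eq_mul]
  have himg : (fun y => y * x) ⁻¹' A = (fun y => y * x⁻¹) '' A := by
    ext y
    simp only [Set.mem_preimage, Set.mem_image]
    constructor
    · intro h; exact ⟨y * x, h, by simp⟩
    · rintro ⟨a, ha, rfl⟩; simpa using ha
  rw [himg, GS.Δ_spec x⁻¹ A hA]

lemma GS_lintegral_mul_right (x : G) (F : G → ℝ≥0∞) :
    ∫⁻ y, F (y * x) ∂GS.μ = ENNReal.ofReal (GS.Δ x⁻¹) * ∫⁻ y, F y ∂GS.μ := by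
  have h := lintegral_map_equiv (μ := GS.μ) F ((Homeomorph.mulRight x).toMeasurableEquiv)
  simp only [Homeomorph.toMeasurableEquiv_coe, Homeomorph.coe_mulRight] at h
  rw [← h, GS_map_mul_right GS x, lintegral_smul_measure, smul_eq_mul]

lemma GS_lintegral_mul_right' (x : G) (F : G → ℝ≥0∞) :
    ∫⁻ y, F y ∂GS.μ = ENNReal.ofReal (GS.Δ x) * ∫⁻ y, F (y * x) ∂GS.μ := by
  rw [GS_lintegral_mul_right GS x F, ← mul_assoc, GS_ofReal_Δ_inv, one_mul]

lemma GS_μV_pos : 0 < GS.μ GS.V := by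
  haveI := GS.haar
  have h1 : (1 : G) ∈ interior GS.V := mem_interior_iff_mem_nhds.2 GS.V_nhds
  calc (0 : ℝ≥0∞) < GS.μ (interior GS.V) := isOpen_interior.measure_pos GS.μ ⟨1, h1⟩
    _ ≤ GS.μ GS.V := measure_mono interior_subset

lemma GS_μV_ne_top : GS.μ GS.V ≠ ⊤ := by
  haveI := GS.haar
  exact ((measure_mono subset_closure).trans_lt GS.V_relCompact.measure_lt_top).ne

lemma GS_Δ_le_on_compact {K : Set G} (hK : IsCompact K) :
    ∃ M : ℝ, ∀ x ∈ K, GS.Δ x ≤ M := by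
  haveI := GS.haar
  refine ⟨(GS.μ (closure GS.V * K) / GS.μ GS.V).toReal, fun x hx => ?_⟩
  have h1 : ENNReal.ofReal (GS.Δ x) * GS.μ GS.V ≤ GS.μ (closure GS.V * K) := by
    rw [← GS.Δ_spec x GS.V GS.V_meas]
    refine measure_mono ?_
    rintro - ⟨y, hy, rfl⟩
    exact Set.mul_mem_mul (subset_closure hy) hx
  have hfin : GS.μ (closure GS.V * K) ≠ ⊤ := (GS.V_relCompact.mul hK).measure_lt_top.ne
  have h2 : ENNReal.ofReal (GS.Δ x) ≤ GS.μ (closure GS.V * K) / GS.μ GS.V :=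
    (ENNReal.le_div_iff_mul_le (Or.inl (GS_μV_pos GS).ne') (Or.inl (GS_μV_ne_top GS))).2 h1
  have hne : GS.μ (closure GS.V * K) / GS.μ GS.V ≠ ⊤ :=
    (ENNReal.div_lt_top hfin (GS_μV_pos GS).ne').ne
  exact (ENNReal.ofReal_le_iff_le_toReal hne).1 h2

lemma GS_Δ_continuous : Continuous GS.Δ := by
  obtain ⟨M, hM⟩ := GS_Δ_le_on_compact GS GS.V_relCompact
  -- closure V is symmetric
  have hsymm : ∀ x ∈ closure GS.V, x⁻¹ ∈ closure GS.V := by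
    intro x hx
    have : x⁻¹ ∈ (closure GS.V)⁻¹ := Set.inv_mem_inv.2 hx
    rwa [inv_closure, GS.V_symm] at this
  set B : ℝ := max M 1 with hB
  have hB1 : (1:ℝ) ≤ B := le_max_right _ _
  have hBpos : 0 < B := lt_of_lt_of_le one_pos hB1
  have hbound : ∀ x ∈ closure GS.V, |Real.log (GS.Δ x)| ≤ Real.log B := by
    intro x hx
    have hup : GS.Δ x ≤ B := (hM x hx).trans (le_max_left _ _)
    have hup' : GS.Δ x⁻¹ ≤ B := (hM x⁻¹ (hsymm x hx)).trans (le_max_left _ _)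
    have hlow : B⁻¹ ≤ GS.Δ x := by
      have h1 : GS.Δ x * GS.Δ x⁻¹ = 1 := GS_Δ_inv GS x
      rw [inv_le_iff_one_le_mul₀ hBpos]
      calc (1:ℝ) = GS.Δ x * GS.Δ x⁻¹ := h1.symm
        _ ≤ GS.Δ x * B := by
            have := (GS.Δ_pos x).le
            nlinarith
      
    rw [abs_le]
    constructor
    · have h2 : Real.log (GS.Δ x) = - Real.log (GS.Δ x⁻¹) := by
        have hlog := Real.log_mul (GS.Δ_pos x).ne' (GS.Δ_pos x⁻¹).ne'
        rw [GS_Δ_inv GS x, Real.log_one] at hlog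
        linarith
      rw [h2]
      have := Real.log_le_log (GS.Δ_pos x⁻¹) hup'
      linarith
    · exact Real.log_le_log (GS.Δ_pos x) hup
  -- log ∘ Δ is multiplicative
  have hlog_pow : ∀ (k : ℕ) (u : G), Real.log (GS.Δ (u ^ k)) = k * Real.log (GS.Δ u) := by
    intro k u
    induction k with
    | zero => simp [GS_Δ_one]
    | succ k ih =>
        rw [pow_succ, GS.Δ_hom, Real.log_mul (GS.Δ_pos _).ne' (GS.Δ_pos _).ne', ih]
        push_cast; ring
  -- continuity at 1
  have key : Filter.Tendsto GS.Δ (nhds 1) (nhds 1) := by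
    have hφ : Filter.Tendsto (fun x => Real.log (GS.Δ x)) (nhds 1) (nhds 0) := by
      rw [Metric.tendsto_nhds]
      intro ε hε
      obtain ⟨n, hn⟩ := exists_nat_gt (Real.log B / ε)
      have hpow : Filter.Tendsto (fun u : G => u ^ (n+1)) (nhds 1) (nhds 1) := by
        simpa using ((continuous_pow (n+1)).tendsto (1 : G))
      have hev : {u : G | u ^ (n+1) ∈ GS.V} ∈ nhds (1 : G) := hpow GS.V_nhds
      filter_upwards [hev] with u hu
      rw [Real.dist_eq, sub_zero]
      have h1 : |Real.log (GS.Δ (u ^ (n+1)))| ≤ Real.log B :=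
        hbound _ (subset_closure hu)
      rw [hlog_pow] at h1
      rw [abs_mul, abs_of_nonneg (by positivity : (0:ℝ) ≤ ((n+1 : ℕ) : ℝ))] at h1
      have hn1 : (0:ℝ) < ((n+1 : ℕ) : ℝ) := by positivity
      have h2 : |Real.log (GS.Δ u)| ≤ Real.log B / ((n+1 : ℕ) : ℝ) := by
        rw [le_div_iff₀ hn1]; linarith [h1]
      refine lt_of_le_of_lt h2 ?_
      rw [div_lt_iff₀ hn1]
      have h3 : Real.log B / ε < ((n+1:ℕ) : ℝ) := by push_cast; push_cast at hn; linarith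
      calc Real.log B = (Real.log B / ε) * ε := by field_simp
        _ < ((n+1:ℕ) : ℝ) * ε := by
            apply mul_lt_mul_of_pos_right h3 hε
        _ = ε * ((n+1:ℕ) : ℝ) := by ring
    have hΔ : ∀ x, GS.Δ x = Real.exp (Real.log (GS.Δ x)) :=
      fun x => (Real.exp_log (GS.Δ_pos x)).symm
    have := (Real.continuous_exp.tendsto 0).comp hφ
    rw [Real.exp_zero] at this
    exact Filter.Tendsto.congr (fun x => (hΔ x).symm) this
  -- continuity everywhere
  rw [continuous_iff_continuousAt]
  intro x
  have t1 : Filter.Tendsto (fun y => x⁻¹ * y) (nhds x) (nhds 1) := by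
    have := (continuous_mul_left (x⁻¹ : G)).tendsto x
    simpa using this
  have t2 := key.comp t1
  have t3 := t2.const_mul (GS.Δ x)
  rw [mul_one] at t3
  refine Filter.Tendsto.congr (fun y => ?_) t3
  simp only [Function.comp_apply]
  rw [← GS.Δ_hom, mul_inv_cancel_left]

end Aux

section Aux2
set_option linter.unusedSectionVars false
set_option linter.unusedTactic false

variable (GS : GroupSetting G)

/-- The auxiliary measure `Δ ⋅ μ.inv`; it is a left Haar measure. -/
def lam : Measure G := GS.μ.inv.withDensity fun s => ENNReal.ofReal (GS.Δ s)

lemma GS_dens_meas : Measurable fun s : G => ENNReal.ofReal (GS.Δ s) :=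
  (GS_Δ_continuous GS).measurable.ennreal_ofReal

lemma GS_map_inv : Measure.map (fun t : G => t⁻¹) GS.μ = GS.μ.inv := rfl

lemma GS_lintegral_inv (h : G → ℝ≥0∞) :
    ∫⁻ s, h s ∂GS.μ.inv = ∫⁻ t, h t⁻¹ ∂GS.μ := by
  have e := lintegral_map_equiv (μ := GS.μ) h ((Homeomorph.inv G).toMeasurableEquiv)
  simp only [Homeomorph.toMeasurableEquiv_coe, Homeomorph.coe_inv] at e
  rw [← GS_map_inv, e]

lemma GS_lam_apply {A : Set G} (hA : MeasurableSet A) :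
    lam GS A = ∫⁻ t, A.indicator (fun _ => (1:ℝ≥0∞)) t⁻¹ * ENNReal.ofReal (GS.Δ t⁻¹) ∂GS.μ := by
  rw [lam, withDensity_apply _ hA, ← lintegral_indicator hA _, GS_lintegral_inv GS]
  refine lintegral_congr fun t => ?_
  by_cases h : t⁻¹ ∈ A
  · simp [Set.indicator_of_mem h]
  · simp [Set.indicator_of_notMem h]

lemma GS_lam_leftInv : (lam GS).IsMulLeftInvariant := by
  haveI := GS.haar
  constructor
  intro g
  ext A hA
  have hA' : MeasurableSet ((g * ·) ⁻¹' A) := (measurable_const_mul g) hA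
  rw [Measure.map_apply (measurable_const_mul g) hA, GS_lam_apply GS hA', GS_lam_apply GS hA]
  rw [GS_lintegral_mul_right' GS g
    (fun t => ((g * ·) ⁻¹' A).indicator (fun _ => (1:ℝ≥0∞)) t⁻¹ * ENNReal.ofReal (GS.Δ t⁻¹))]
  have hpt : ∀ t : G,
      ((g * ·) ⁻¹' A).indicator (fun _ => (1:ℝ≥0∞)) (t * g)⁻¹ * ENNReal.ofReal (GS.Δ (t * g)⁻¹)
      = ENNReal.ofReal (GS.Δ g⁻¹) *
        (A.indicator (fun _ => (1:ℝ≥0∞)) t⁻¹ * ENNReal.ofReal (GS.Δ t⁻¹)) := by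
    intro t
    have h1 : ((g * ·) ⁻¹' A).indicator (fun _ => (1:ℝ≥0∞)) (t * g)⁻¹
        = A.indicator (fun _ => (1:ℝ≥0∞)) t⁻¹ := by
      have : (t * g)⁻¹ ∈ (g * ·) ⁻¹' A ↔ t⁻¹ ∈ A := by
        simp [mul_inv_rev, ← mul_assoc]
      by_cases h : t⁻¹ ∈ A
      · rw [Set.indicator_of_mem (this.2 h), Set.indicator_of_mem h]
      · rw [Set.indicator_of_notMem (fun hc => h (this.1 hc)), Set.indicator_of_notMem h]
    have h2 : ENNReal.ofReal (GS.Δ (t * g)⁻¹)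
        = ENNReal.ofReal (GS.Δ g⁻¹) * ENNReal.ofReal (GS.Δ t⁻¹) := by
      rw [mul_inv_rev, GS.Δ_hom, ENNReal.ofReal_mul (GS.Δ_pos _).le]
    rw [h1, h2]
    ring
  rw [lintegral_congr hpt, lintegral_const_mul' _ _ ENNReal.ofReal_ne_top, ← mul_assoc,
    GS_ofReal_Δ_inv, one_mul]

lemma GS_lam_finite : IsFiniteMeasureOnCompacts (lam GS) := by
  haveI := GS.haar
  constructor
  intro K hK
  have hcK : IsCompact (closure K) := hK.closure
  obtain ⟨M, hM⟩ := GS_Δ_le_on_compact GS hcK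
  refine lt_of_le_of_lt (measure_mono (subset_closure : K ⊆ closure K)) ?_
  rw [lam, withDensity_apply _ isClosed_closure.measurableSet]
  calc ∫⁻ s in closure K, ENNReal.ofReal (GS.Δ s) ∂GS.μ.inv
      ≤ ∫⁻ _ in closure K, ENNReal.ofReal M ∂GS.μ.inv := by
        refine setLIntegral_mono measurable_const fun s hs => ?_
        exact ENNReal.ofReal_le_ofReal (hM s hs)
    _ = ENNReal.ofReal M * GS.μ.inv (closure K) := by
        rw [setLIntegral_const, mul_comm]
    _ < ⊤ := by
        refine ENNReal.mul_lt_top ENNReal.ofReal_lt_top ?_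
        rw [Measure.inv_apply]
        exact hcK.inv.measure_lt_top

/-- The comparison constant between `lam` and `μ`. -/
def GS_c0 : NNReal :=
  letI := GS.haar
  letI := GS_lam_finite GS
  letI := GS_lam_leftInv GS
  Measure.haarScalarFactor (lam GS) GS.μ

lemma GS_lam_le : lam GS ≤ (GS_c0 GS : ℝ≥0∞) • GS.μ := by
  haveI := GS.haar
  haveI := GS_lam_leftInv GS
  haveI := GS_lam_finite GS
  refine Measure.le_iff.2 fun A hA => ?_
  have hmono : Monotone fun k : ℕ => A ∩ closure (compactCovering G k) := by
    intro a b hab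
    exact Set.inter_subset_inter_right _ (closure_mono (compactCovering_subset G hab))
  have hU : (⋃ k, A ∩ closure (compactCovering G k)) = A := by
    rw [← Set.inter_iUnion, iUnion_closure_compactCovering, Set.inter_univ]
  have h1 : lam GS A = ⨆ k, lam GS (A ∩ closure (compactCovering G k)) := by
    conv_lhs => rw [← hU]
    exact hmono.measure_iUnion
  rw [h1, Measure.smul_apply, smul_eq_mul]
  refine iSup_le fun k => ?_
  have hcomp : IsCompact (closure (A ∩ closure (compactCovering G k))) :=
    ((isCompact_compactCovering G k).closure).closure_of_subset Set.inter_subset_right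
  have h2 : lam GS (A ∩ closure (compactCovering G k))
      = (GS_c0 GS : ℝ≥0∞) * GS.μ (A ∩ closure (compactCovering G k)) := by
    have := Measure.measure_isMulInvariant_eq_smul_of_isCompact_closure (lam GS) GS.μ hcomp
    rw [this]
    rfl
  rw [h2]
  exact mul_le_mul_right (measure_mono Set.inter_subset_left) _

lemma GS_lintegral_dens_inv_le (h : G → ℝ≥0∞) :
    ∫⁻ s, ENNReal.ofReal (GS.Δ s) * h s ∂GS.μ.inv
      ≤ (GS_c0 GS : ℝ≥0∞) * ∫⁻ s, h s ∂GS.μ := by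
  have h1 : ∫⁻ s, h s ∂(lam GS) = ∫⁻ s, ENNReal.ofReal (GS.Δ s) * h s ∂GS.μ.inv := by
    rw [lam, lintegral_withDensity_eq_lintegral_mul_non_measurable _ (GS_dens_meas GS)
      (Filter.Eventually.of_forall fun x => ENNReal.ofReal_lt_top)]
    rfl
  rw [← h1, ← smul_eq_mul, ← lintegral_smul_measure]
  exact lintegral_mono' (GS_lam_le GS) le_rfl

lemma GS_lintegral_conj_inv (xi : G) (Q : G → ℝ≥0∞) :
    ∫⁻ t, Q (xi * t⁻¹) ∂GS.μ = ENNReal.ofReal (GS.Δ xi) * ∫⁻ s, Q s ∂GS.μ.inv := by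
  haveI := GS.haar
  have hmap : Measure.map (fun t : G => xi * t⁻¹) GS.μ
      = ENNReal.ofReal (GS.Δ xi) • GS.μ.inv := by
    ext A hA
    have hmeas : Measurable fun t : G => xi * t⁻¹ := (measurable_inv.const_mul xi)
    rw [Measure.map_apply hmeas hA, Measure.smul_apply, smul_eq_mul, Measure.inv_apply]
    have hset : (fun t : G => xi * t⁻¹) ⁻¹' A = (fun y => y * xi) '' A⁻¹ := by
      ext t
      simp only [Set.mem_preimage, Set.mem_image, Set.mem_inv]
      constructor
      · intro h
        exact ⟨t * xi⁻¹, by simpa [mul_inv_rev] using h, by simp [mul_assoc]⟩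
      · rintro ⟨y, hy, rfl⟩
        simpa [mul_inv_rev, ← mul_assoc] using hy
    rw [hset, GS.Δ_spec xi A⁻¹ hA.inv]
  have e := lintegral_map_equiv (μ := GS.μ) Q
    (((Homeomorph.inv G).trans (Homeomorph.mulLeft xi)).toMeasurableEquiv)
  simp only [Homeomorph.toMeasurableEquiv_coe, Homeomorph.trans_apply, Homeomorph.coe_inv,
    Homeomorph.coe_mulLeft] at e
  have hco : ⇑((Homeomorph.inv G).trans (Homeomorph.mulLeft xi)) = fun t : G => xi * t⁻¹ := by
    ext t
    simp [Homeomorph.trans_apply]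
  rw [hco] at e
  rw [← e, hmap, lintegral_smul_measure, smul_eq_mul]

end Aux2

section Aux3
set_option linter.unusedSectionVars false
set_option linter.unusedTactic false

variable (GS : GroupSetting G)

lemma GS_le_essSup {S : Set G} (hS : MeasurableSet S) {h : G → ℝ≥0∞} (hcont : Continuous h)
    {p : G} (hp : p ∈ interior S) : h p ≤ essSup h (GS.μ.restrict S) := by
  haveI := GS.haar
  by_contra hlt
  push_neg at hlt
  set c := essSup h (GS.μ.restrict S) with hc
  have hO : IsOpen {y | c < h y} := isOpen_lt continuous_const hcont
  have hae : ∀ᵐ y ∂GS.μ.restrict S, h y ≤ c := ae_le_essSup h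
  have h0 : GS.μ.restrict S {y | c < h y} = 0 := by
    rw [ae_iff] at hae
    simpa only [not_le] using hae
  rw [Measure.restrict_apply hO.measurableSet] at h0
  have hpos : 0 < GS.μ ({y | c < h y} ∩ interior S) :=
    (hO.inter isOpen_interior).measure_pos GS.μ ⟨p, hlt, hp⟩
  exact absurd h0
    (ne_of_gt (lt_of_lt_of_le hpos (measure_mono (Set.inter_subset_inter_right _ interior_subset))))

lemma enn_continuous {g : G → ℂ} (hg : Continuous g) : Continuous (enn g) :=
  ENNReal.continuous_coe.comp (continuous_nnnorm.comp hg)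

/-- Pointwise supremum of `|g(p z)|` over `p` in the interior of `V`. -/
def supInt (g : G → ℂ) : G → ℝ≥0∞ := fun z => ⨆ p ∈ interior GS.V, enn g (p * z)

lemma supInt_meas {g : G → ℂ} (hg : Continuous g) : Measurable (supInt GS g) := by
  apply LowerSemicontinuous.measurable
  intro x y hy
  obtain ⟨p, hp, hyp⟩ : ∃ p, ∃ _ : p ∈ interior GS.V, y < enn g (p * x) := by
    simpa only [supInt, lt_iSup_iff] using hy
  have hco : Continuous fun z : G => enn g (p * z) :=
    (enn_continuous hg).comp (continuous_mul_left p)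
  have hmem : {z : G | y < enn g (p * z)} ∈ nhds x :=
    (isOpen_lt continuous_const hco).mem_nhds hyp
  filter_upwards [hmem] with z hz
  exact lt_of_lt_of_le hz (le_iSup₂ (f := fun p (_ : p ∈ interior GS.V) => enn g (p * z)) p hp)

lemma supInt_le_sharpR {g : G → ℂ} (hg : Continuous g) (z : G) :
    supInt GS g z ≤ sharpR GS (enn g) z := by
  refine iSup₂_le fun p hp => ?_
  exact GS_le_essSup GS GS.V_meas ((enn_continuous hg).comp (continuous_mul_right z)) hp

lemma GS_cover : ∃ m : Finset G, ∀ u ∈ GS.V, ∃ xi ∈ m, u * xi⁻¹ ∈ interior GS.V := by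
  have h1 : (1:G) ∈ interior GS.V := mem_interior_iff_mem_nhds.2 GS.V_nhds
  have hcov : closure GS.V ⊆ ⋃ x : G, (fun u => u * x⁻¹) ⁻¹' interior GS.V := by
    intro u _
    exact Set.mem_iUnion.2 ⟨u, by simpa using h1⟩
  obtain ⟨m, hm⟩ := GS.V_relCompact.elim_finite_subcover
    (fun x : G => (fun u => u * x⁻¹) ⁻¹' interior GS.V)
    (fun x => isOpen_interior.preimage (continuous_mul_right x⁻¹)) hcov
  refine ⟨m, fun u hu => ?_⟩
  obtain ⟨xi, hxi, hmem⟩ := Set.mem_iUnion₂.1 (hm (subset_closure hu))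
  exact ⟨xi, hxi, hmem⟩

lemma GS_tsum_bound {Λ : Set G} {n : ℕ} (hΛ : RelSep GS Λ n) (c : Λ → ℝ≥0∞) (T : ℝ≥0∞) (x : G)
    (hc : ∀ l : Λ, x ∈ (l : G) • GS.V → c l ≤ T) :
    ∑' l : Λ, ((l : G) • GS.V).indicator (fun _ => c l) x ≤ n * T := by
  classical
  have key : ∀ l : Λ, ((l : G) • GS.V).indicator (fun _ => c l) x
      ≤ if (l : G) ∈ x • GS.V then T else 0 := by
    intro l
    by_cases hx : x ∈ (l : G) • GS.V
    · have hl : (l : G) ∈ x • GS.V := by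
        obtain ⟨v, hv, hvx⟩ := hx
        have hv' : v⁻¹ ∈ GS.V := by
          rw [← GS.V_symm]
          exact Set.inv_mem_inv.2 hv
        refine ⟨v⁻¹, hv', ?_⟩
        have hx' : x = (l : G) * v := by rw [← hvx]; rfl
        rw [hx']
        show ((l : G) * v) * v⁻¹ = (l : G)
        rw [mul_inv_cancel_right]
      rw [Set.indicator_of_mem hx, if_pos hl]
      exact hc l hx
    · rw [Set.indicator_of_notMem hx]
      exact zero_le
  refine le_trans (ENNReal.tsum_le_tsum key) ?_
  rw [ENNReal.tsum_eq_iSup_sum]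
  refine iSup_le fun s => ?_
  set P : Λ → Prop := fun l => (l : G) ∈ x • GS.V with hP
  have hcard : ((s.filter P).card : ℝ≥0∞) ≤ (n : ℝ≥0∞) := by
    have h3 : (((s.filter P).image Subtype.val : Finset G) : Set G) ⊆ Λ ∩ x • GS.V := by
      intro a ha
      simp only [Finset.coe_image, Set.mem_image, Finset.mem_coe, Finset.mem_filter] at ha
      obtain ⟨l, ⟨_, hl⟩, rfl⟩ := ha
      exact ⟨l.2, hl⟩
    have h4 := (Set.encard_le_encard h3).trans (hΛ x)
    rw [Set.encard_coe_eq_coe_finsetCard,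
      Finset.card_image_of_injective _ Subtype.val_injective] at h4
    exact_mod_cast h4
  calc ∑ l ∈ s, (if P l then T else 0)
      = ∑ _l ∈ s.filter P, T := by rw [Finset.sum_filter]
    _ = ((s.filter P).card : ℝ≥0∞) * T := by rw [Finset.sum_const, nsmul_eq_mul]
    _ ≤ (n : ℝ≥0∞) * T := mul_le_mul_left hcard T

lemma GS_pairing_bound (f g : G → ℂ) (l : G) :
    (‖pairing GS f fun y => g (l⁻¹ * y)‖₊ : ℝ≥0∞)
      ≤ convE GS (enn f) (fun t => enn g t⁻¹) l := by
  refine le_trans (enorm_integral_le_lintegral_enorm _) (le_of_eq ?_)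
  refine lintegral_congr fun y => ?_
  simp only [enn, nnnorm_mul, ENNReal.coe_mul, mul_inv_rev, inv_inv]
  congr 1
  show (‖f y * star (g (l⁻¹ * y))‖₊ : ℝ≥0∞) = _
  rw [nnnorm_mul, nnnorm_star, ENNReal.coe_mul]

lemma GS_N_sum_le (E : BFSpace GS) {ι : Type*} (s : Finset ι) (F : ι → G → ℝ≥0∞) :
    E.N (fun x => ∑ i ∈ s, F i x) ≤ ∑ i ∈ s, E.N (F i) := by
  classical
  induction s using Finset.induction with
  | empty =>
      simp only [Finset.sum_empty]
      have h0 : E.N (fun _ : G => (0:ℝ≥0∞)) = 0 := by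
        have := E.smul_eq 0 (fun _ => 0)
        simpa using this
      exact le_of_eq h0
  | @insert a s ha ih =>
      simp only [Finset.sum_insert ha]
      exact le_trans (E.add_le _ _) (add_le_add le_rfl ih)

end Aux3

set_option maxHeartbeats 1000000


/-- For `f ∈ E` and continuous `g ∈ W_R(C₀,L¹_w)`, the sequence
`(⟨f, L_λ g⟩)_{λ∈Λ}` lies in `E_d(Λ)` with norm at most `C ‖f‖_E ‖g‖_{W_R(L^∞,L¹_w)}`,
the constant depending only on the spreadness `n` of `Λ`, on `w` and on the
admissibility constant `Cadm`. -/
theorem statement4 (GS : GroupSetting G) (w : G → ℝ) (Cadm : ℝ) (n : ℕ)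
    (hw : IsAdmissibleWeight GS w) (hCadm : 0 < Cadm) :
    ∃ C : ℝ≥0∞, C ≠ ⊤ ∧
      ∀ E : BFSpace GS, IsTI GS E → IsAdmissibleFor GS w E Cadm →
        ∀ Λ : Set G, RelSep GS Λ n →
          ∀ f g : G → ℂ, E.Mem f → Continuous g → WR_Linf_L1w GS w (enn g) ≠ ⊤ →
            EdNorm GS E Λ (fun l => pairing GS f (fun y => g ((l : G)⁻¹ * y))) ≤
              C * E.N (enn f) * WR_Linf_L1w GS w (enn g) := by
  classical
  haveI := GS.haar
  obtain ⟨m, hm⟩ := GS_cover GS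
  set c0 : ℝ≥0∞ := (GS_c0 GS : ℝ≥0∞) with hc0
  refine ⟨(n : ℝ≥0∞) * ENNReal.ofReal (1 / Cadm) * c0 *
      ∑ xi ∈ m, ENNReal.ofReal (GS.Δ xi) * ENNReal.ofReal (w xi), ?_, ?_⟩
  · refine ENNReal.mul_ne_top (ENNReal.mul_ne_top (ENNReal.mul_ne_top ?_ ?_) ?_) ?_
    · exact ENNReal.natCast_ne_top n
    · exact ENNReal.ofReal_ne_top
    · exact ENNReal.coe_ne_top
    · refine (ENNReal.sum_lt_top.2 fun xi _ => ?_).ne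
      exact ENNReal.mul_lt_top ENNReal.ofReal_lt_top ENNReal.ofReal_lt_top
  intro E hTI hAdm Λ hΛ f g hf hg hWR
  set Φb : G → ℝ≥0∞ := supInt GS g with hΦb
  set Hs : G → ℝ≥0∞ := fun t => ∑ xi ∈ m, Φb (xi * t⁻¹) with hHs
  set T : G → ℝ≥0∞ := convE GS (enn f) Hs with hT
  set WRn : ℝ≥0∞ := WR_Linf_L1w GS w (enn g) with hWRn
  -- Step 1: pointwise bound for the discrete sum
  have step1 : ∀ x : G,
      (∑' l : Λ, ((l : G) • GS.V).indicator
        (fun _ => (‖pairing GS f fun y => g ((l : G)⁻¹ * y)‖₊ : ℝ≥0∞)) x)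
      ≤ (n : ℝ≥0∞) * T x := by
    intro x
    refine GS_tsum_bound GS hΛ _ (T x) x fun l hx => ?_
    refine le_trans (GS_pairing_bound GS f g (l : G)) ?_
    refine lintegral_mono fun y => ?_
    refine mul_le_mul_right ?_ _
    -- bound enn g ((y⁻¹ * l)⁻¹) ≤ Hs (y⁻¹ * x)
    obtain ⟨v, hv, hvx⟩ := hx
    have hx' : x = (l : G) * v := by rw [← hvx]; rfl
    obtain ⟨xi, hxi, hxiV⟩ := hm v hv
    have key : ((y⁻¹ * (l : G))⁻¹ : G) = (v * xi⁻¹) * (xi * (y⁻¹ * x)⁻¹) := by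
      rw [hx']
      group
    show enn g ((y⁻¹ * (l : G))⁻¹) ≤ Hs (y⁻¹ * x)
    rw [key]
    calc enn g ((v * xi⁻¹) * (xi * (y⁻¹ * x)⁻¹))
        ≤ Φb (xi * (y⁻¹ * x)⁻¹) :=
          le_iSup₂ (f := fun p (_ : p ∈ interior GS.V) => enn g (p * (xi * (y⁻¹ * x)⁻¹)))
            (v * xi⁻¹) hxiV
      _ ≤ Hs (y⁻¹ * x) :=
          Finset.single_le_sum (f := fun xi => Φb (xi * (y⁻¹ * x)⁻¹))
            (fun i _ => zero_le) hxi
  -- Step 2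
  have step2 : EdNorm GS E Λ (fun l => pairing GS f fun y => g ((l : G)⁻¹ * y))
      ≤ (n : ℝ≥0∞) * E.N T := by
    refine le_trans (E.mono _ _ (Filter.Eventually.of_forall step1)) (le_of_eq ?_)
    exact E.smul_eq (n : ℝ≥0∞) T
  -- Step 3: decompose T as a finite sum of convolutions
  have hΦb_meas : Measurable Φb := supInt_meas GS hg
  have step3 : ∀ x : G, T x = ∑ xi ∈ m, convE GS (enn f) (fun t => Φb (xi * t⁻¹)) x := by
    intro x
    rw [hT]
    show ∫⁻ y, enn f y * Hs (y⁻¹ * x) ∂GS.μ = _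
    have hpt : ∀ y : G, enn f y * Hs (y⁻¹ * x)
        = ∑ xi ∈ m, enn f y * Φb (xi * (y⁻¹ * x)⁻¹) := by
      intro y
      rw [hHs, Finset.mul_sum]
    rw [lintegral_congr hpt]
    exact lintegral_finset_sum' m fun xi _ =>
      (hf.1.enorm.mul (((hΦb_meas.comp
        (((measurable_inv.mul_const x).inv.const_mul xi)))).aemeasurable))
  have step4 : E.N T ≤ ∑ xi ∈ m, E.N (convE GS (enn f) (fun t => Φb (xi * t⁻¹))) := by
    refine le_trans (E.mono _ _ (Filter.Eventually.of_forall fun x => le_of_eq (step3 x)))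
      (GS_N_sum_le GS E m _)
  -- Step 5: per-element bound
  have step5 : ∀ xi ∈ m, E.N (convE GS (enn f) (fun t => Φb (xi * t⁻¹)))
      ≤ ENNReal.ofReal (1 / Cadm) * E.N (enn f) *
        (ENNReal.ofReal (GS.Δ xi) * (ENNReal.ofReal (w xi) * (c0 * WRn))) := by
    intro xi _
    refine le_trans (hAdm.convR (enn f) _) ?_
    refine mul_le_mul_right ?_ _
    have hconj := GS_lintegral_conj_inv GS xi (fun s => Φb s * ENNReal.ofReal (w (s⁻¹ * xi)))
    have hre : L1wNorm GS w (fun t => Φb (xi * t⁻¹))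
        = ENNReal.ofReal (GS.Δ xi) * ∫⁻ s, Φb s * ENNReal.ofReal (w (s⁻¹ * xi)) ∂GS.μ.inv := by
      refine Eq.trans (lintegral_congr fun t => ?_) hconj
      show Φb (xi * t⁻¹) * ENNReal.ofReal (w t)
          = Φb (xi * t⁻¹) * ENNReal.ofReal (w ((xi * t⁻¹)⁻¹ * xi))
      rw [show ((xi * t⁻¹)⁻¹ * xi : G) = t by group]
    rw [hre]
    refine mul_le_mul_right ?_ _
    -- inner : ∫⁻ s, Φb s * ofReal (w (s⁻¹ * xi)) ∂μ.inv ≤ ofReal (w xi) * (c0 * WRn)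
    have h2 : ∀ s : G, Φb s * ENNReal.ofReal (w (s⁻¹ * xi))
        ≤ ENNReal.ofReal (w xi) * (ENNReal.ofReal (GS.Δ s) * (Φb s * ENNReal.ofReal (w s))) := by
      intro s
      have hsub : w (s⁻¹ * xi) ≤ w s⁻¹ * w xi := hw.submul s⁻¹ xi
      have hrel : w s⁻¹ = GS.Δ s * w s := by
        have := hw.delta_rel s⁻¹
        rwa [inv_inv] at this
      have : ENNReal.ofReal (w (s⁻¹ * xi))
          ≤ ENNReal.ofReal (w xi) * (ENNReal.ofReal (GS.Δ s) * ENNReal.ofReal (w s)) := by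
        refine le_trans (ENNReal.ofReal_le_ofReal hsub) (le_of_eq ?_)
        rw [hrel, ← ENNReal.ofReal_mul (GS.Δ_pos s).le,
          ← ENNReal.ofReal_mul (hw.pos xi).le]
        congr 1
        ring
      calc Φb s * ENNReal.ofReal (w (s⁻¹ * xi))
          ≤ Φb s * (ENNReal.ofReal (w xi) * (ENNReal.ofReal (GS.Δ s) * ENNReal.ofReal (w s))) :=
            mul_le_mul_right this _
        _ = ENNReal.ofReal (w xi) * (ENNReal.ofReal (GS.Δ s) * (Φb s * ENNReal.ofReal (w s))) := by
            ring
    refine le_trans (lintegral_mono h2) ?_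
    rw [lintegral_const_mul' _ _ ENNReal.ofReal_ne_top]
    refine mul_le_mul_right ?_ _
    refine le_trans (GS_lintegral_dens_inv_le GS _) ?_
    rw [← hc0]
    refine mul_le_mul_right ?_ _
    have hWRn' : WRn = ∫⁻ s, sharpR GS (enn g) s * ENNReal.ofReal (w s) ∂GS.μ := rfl
    rw [hWRn']
    refine lintegral_mono fun s => ?_
    exact mul_le_mul_left (supInt_le_sharpR GS hg s) _
  -- Final combination
  calc EdNorm GS E Λ (fun l => pairing GS f fun y => g ((l : G)⁻¹ * y))
      ≤ (n : ℝ≥0∞) * E.N T := step2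
    _ ≤ (n : ℝ≥0∞) * ∑ xi ∈ m, E.N (convE GS (enn f) (fun t => Φb (xi * t⁻¹))) :=
        mul_le_mul_right step4 _
    _ ≤ (n : ℝ≥0∞) * ∑ xi ∈ m, (ENNReal.ofReal (1 / Cadm) * E.N (enn f) *
          (ENNReal.ofReal (GS.Δ xi) * (ENNReal.ofReal (w xi) * (c0 * WRn)))) :=
        mul_le_mul_right (Finset.sum_le_sum step5) _
    _ = ((n : ℝ≥0∞) * ENNReal.ofReal (1 / Cadm) * c0 *
          ∑ xi ∈ m, ENNReal.ofReal (GS.Δ xi) * ENNReal.ofReal (w xi)) * E.N (enn f) * WRn := by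
        rw [Finset.mul_sum, Finset.mul_sum, Finset.sum_mul, Finset.sum_mul]
        refine Finset.sum_congr rfl fun xi _ => ?_
        ring

end CoorbitCovers
end
end

section
/- Let G be a locally compact, σ-compact IN group (with the fixed neighborhood V invariant under inner automorphisms), let E be a solid, translation invariant BF space on G, let w be an admissible weight for E, and let Λ be a discrete, closed subgroup of G (hence relatively separated). Then E_d(Λ) is a right module over the convolution algebra ℓ¹_w(Λ): for c ∈ E_d(Λ) and a ∈ ℓ¹_w(Λ), the convolution (c*a)_λ = Σ_{μ∈Λ} c_μ a_{μ⁻¹λ} belongs to E_d(Λ) and ‖c*a‖_{E_d} ≤ C ‖c‖_{E_d} ‖a‖_{ℓ¹_w}. -/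
open MeasureTheory ENNReal Filter Set Pointwise

noncomputable section

namespace CoorbitCovers

variable {G : Type*}

variable [Group G] [TopologicalSpace G] [IsTopologicalGroup G]
  [LocallyCompactSpace G] [SigmaCompactSpace G] [MeasurableSpace G] [BorelSpace G]

/-! ### Auxiliary lemmas for Statement 18 -/

theorem N_zero {GS : GroupSetting G} (E : BFSpace GS) : E.N (fun _ => 0) = 0 := by
  have h := E.smul_eq 0 (fun _ => 0)
  simpa using h

theorem N_finset_sum_le {GS : GroupSetting G} (E : BFSpace GS) {ι : Type*} (t : Finset ι)
    (h : ι → G → ℝ≥0∞) : E.N (fun x => ∑ i ∈ t, h i x) ≤ ∑ i ∈ t, E.N (h i) := by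
  classical
  induction t using Finset.induction_on with
  | empty => simp [N_zero]
  | @insert a s ha ih =>
      have hfun : (fun x => ∑ i ∈ insert a s, h i x)
          = fun x => h a x + ∑ i ∈ s, h i x := funext fun x => Finset.sum_insert ha
      rw [hfun, Finset.sum_insert ha]
      exact le_trans (E.add_le _ _) (add_le_add le_rfl ih)

theorem enn_tsum_le {ι : Type*} (z : ι → ℂ) :
    (‖∑' i, z i‖₊ : ℝ≥0∞) ≤ ∑' i, (‖z i‖₊ : ℝ≥0∞) := by
  by_cases h : ∑' i, (‖z i‖₊ : ℝ≥0∞) = ⊤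
  · simp [h]
  · have hs : Summable fun i => ‖z i‖₊ := ENNReal.tsum_coe_ne_top_iff_summable.mp h
    rw [← ENNReal.coe_tsum hs]
    exact ENNReal.coe_le_coe.mpr (nnnorm_tsum_le hs)

theorem relSep_countable (GS : GroupSetting G) {Λ : Set G} {n : ℕ}
    (hsep : RelSep GS Λ n) : Λ.Countable := by
  have h1U : (1 : G) ∈ interior GS.V := mem_interior_iff_mem_nhds.mpr GS.V_nhds
  have hΛ : Λ = ⋃ k : ℕ, Λ ∩ compactCovering G k := by
    rw [← Set.inter_iUnion, iUnion_compactCovering, Set.inter_univ]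
  rw [hΛ]
  refine Set.countable_iUnion fun k => Set.Finite.countable ?_
  have hK := isCompact_compactCovering G k
  obtain ⟨s, hs⟩ := hK.elim_finite_subcover (fun x : G => x • interior GS.V)
      (fun x => isOpen_interior.smul x)
      (fun x _ => Set.mem_iUnion.mpr ⟨x, Set.mem_smul_set.mpr ⟨1, h1U, mul_one x⟩⟩)
  have hsub : Λ ∩ compactCovering G k ⊆ ⋃ x ∈ s, Λ ∩ x • GS.V := by
    intro y hy
    rcases Set.mem_iUnion₂.mp (hs hy.2) with ⟨x, hx, hyx⟩
    exact Set.mem_iUnion₂.mpr ⟨x, hx, hy.1, Set.smul_set_mono interior_subset hyx⟩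
  exact Set.Finite.subset
    (Set.Finite.biUnion s.finite_toSet fun x _ => Set.finite_of_encard_le_coe (hsep x)) hsub

theorem conj_mem_iff (GS : GroupSetting G)
    (hIN : ∀ x : G, (fun y => x * y * x⁻¹) '' GS.V = GS.V) (g u : G) :
    u ∈ GS.V ↔ g * u * g⁻¹ ∈ GS.V := by
  constructor
  · intro hu; rw [← hIN g]; exact ⟨u, hu, rfl⟩
  · intro hu
    have h2 : g⁻¹ * (g * u * g⁻¹) * (g⁻¹)⁻¹ ∈ GS.V := by
      rw [← hIN g⁻¹]; exact ⟨_, hu, rfl⟩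
    have h3 : g⁻¹ * (g * u * g⁻¹) * (g⁻¹)⁻¹ = u := by group
    rwa [h3] at h2

theorem smul_mem_iff_IN (GS : GroupSetting G)
    (hIN : ∀ x : G, (fun y => x * y * x⁻¹) '' GS.V = GS.V)
    (p n x : G) : x ∈ (p * n) • GS.V ↔ x * n⁻¹ ∈ p • GS.V := by
  rw [Set.mem_smul_set_iff_inv_smul_mem, Set.mem_smul_set_iff_inv_smul_mem]
  simp only [smul_eq_mul, mul_inv_rev]
  rw [conj_mem_iff GS hIN n (n⁻¹ * p⁻¹ * x)]
  have h3 : n * (n⁻¹ * p⁻¹ * x) * n⁻¹ = p⁻¹ * (x * n⁻¹) := by group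
  rw [h3]

theorem mem_inv_smul_iff_IN (GS : GroupSetting G)
    (hIN : ∀ x : G, (fun y => x * y * x⁻¹) '' GS.V = GS.V)
    (n x y : G) : y⁻¹ * x ∈ n • GS.V ↔ y ∈ (x * n⁻¹) • GS.V := by
  have hsymm : ∀ u : G, u ∈ GS.V ↔ u⁻¹ ∈ GS.V := by
    intro u
    nth_rewrite 1 [← GS.V_symm]
    exact Set.mem_inv
  rw [Set.mem_smul_set_iff_inv_smul_mem, Set.mem_smul_set_iff_inv_smul_mem]
  simp only [smul_eq_mul, mul_inv_rev, inv_inv]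
  rw [hsymm (n⁻¹ * (y⁻¹ * x))]
  rw [conj_mem_iff GS hIN n ((n⁻¹ * (y⁻¹ * x))⁻¹)]
  have h3 : n * (n⁻¹ * (y⁻¹ * x))⁻¹ * n⁻¹ = n * x⁻¹ * y := by group
  rw [h3]

/-- Left multiplication by an element of a subgroup, as an equivalence of the
coerced set. -/
def lamEquiv (Λ : Subgroup G) (m : (Λ : Set G)) : (Λ : Set G) ≃ (Λ : Set G) where
  toFun n := ⟨(m : G) * (n : G), mul_mem m.2 n.2⟩
  invFun n := ⟨(m : G)⁻¹ * (n : G), mul_mem (inv_mem m.2) n.2⟩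
  left_inv n := Subtype.ext (inv_mul_cancel_left _ _)
  right_inv n := Subtype.ext (mul_inv_cancel_left _ _)

theorem const_mul_indicator_one {α : Type*} {S : Set α} (A : ℝ≥0∞) (z : α) :
    A * S.indicator 1 z = S.indicator (fun _ => A) z := by
  by_cases hz : z ∈ S <;> simp [hz]

/-- If `G` is an IN group (with `V` invariant under inner
automorphisms) and `Λ` is a discrete, closed subgroup of `G` (hence relatively
separated), then `E_d(Λ)` is a right convolution module over `ℓ¹_w(Λ)`:
`‖c * a‖_{E_d} ≤ C ‖c‖_{E_d} ‖a‖_{ℓ¹_w}` where `(c*a)_λ = Σ_μ c_μ a_{μ⁻¹λ}`. -/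
theorem statement18 (GS : GroupSetting G)
    (hIN : ∀ x : G, (fun y => x * y * x⁻¹) '' GS.V = GS.V)
    (w : G → ℝ) (E : BFSpace GS) (Cadm : ℝ)
    (hTI : IsTI GS E) (hw : IsAdmissibleFor GS w E Cadm)
    (Λ : Subgroup G) (hΛclosed : IsClosed (Λ : Set G))
    (hΛdiscrete : DiscreteTopology Λ)
    (nΛ : ℕ) (hΛsep : RelSep GS (Λ : Set G) nΛ) :
    ∃ C : ℝ≥0∞, C ≠ ⊤ ∧
      ∀ c a : G → ℂ,
        EdNorm GS E (Λ : Set G) (fun l => c (l : G)) ≠ ⊤ →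
        (∑' l : (Λ : Set G), (‖a (l : G)‖₊ : ℝ≥0∞) * ENNReal.ofReal (w (l : G))) ≠ ⊤ →
        EdNorm GS E (Λ : Set G)
            (fun l => ∑' m : (Λ : Set G), c (m : G) * a ((m : G)⁻¹ * (l : G))) ≤
          C * EdNorm GS E (Λ : Set G) (fun l => c (l : G)) *
            ∑' l : (Λ : Set G), (‖a (l : G)‖₊ : ℝ≥0∞) * ENNReal.ofReal (w (l : G)) := by
  classical
  haveI : GS.μ.IsHaarMeasure := GS.haar
  haveI hcnt : Countable ↥(Λ : Set G) := (relSep_countable GS hΛsep).to_subtype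
  set μV : ℝ≥0∞ := GS.μ GS.V with hμV
  have h1U : (1 : G) ∈ interior GS.V := mem_interior_iff_mem_nhds.mpr GS.V_nhds
  have hμV0 : μV ≠ 0 := by
    have hpos : 0 < GS.μ (interior GS.V) := isOpen_interior.measure_pos GS.μ ⟨1, h1U⟩
    exact (hpos.trans_le (measure_mono interior_subset)).ne'
  have hμVtop : μV ≠ ⊤ :=
    ((measure_mono subset_closure).trans_lt GS.V_relCompact.measure_lt_top).ne
  have hVsmul : ∀ z : G, GS.μ (z • GS.V) = μV := fun z => measure_smul (μ := GS.μ) z GS.V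
  have hVmeas : ∀ z : G, MeasurableSet (z • GS.V) := by
    intro z
    have hset : z • GS.V = (fun y => z⁻¹ * y) ⁻¹' GS.V := by
      ext y
      simp [Set.mem_smul_set_iff_inv_smul_mem, Set.mem_preimage]
    rw [hset]
    exact (measurable_const_mul z⁻¹) GS.V_meas
  -- the finite covering of V*V by right translates of V
  have hVV : GS.V * GS.V ⊆ closure GS.V * closure GS.V :=
    Set.mul_subset_mul subset_closure subset_closure
  have hKc : IsCompact (closure GS.V * closure GS.V) :=
    GS.V_relCompact.mul GS.V_relCompact
  obtain ⟨t, ht⟩ := hKc.elim_finite_subcover (fun q : G => (fun y => y * q) '' interior GS.V)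
      (fun q => (Homeomorph.mulRight q).isOpenMap _ isOpen_interior)
      (fun z _ => Set.mem_iUnion.mpr ⟨z, ⟨1, h1U, one_mul z⟩⟩)
  have hcov : ∀ z ∈ GS.V * GS.V, ∃ q ∈ t, z * q⁻¹ ∈ GS.V := by
    intro z hz
    rcases Set.mem_iUnion₂.mp (ht (hVV hz)) with ⟨q, hq, u, hu, huz⟩
    refine ⟨q, hq, ?_⟩
    have : z * q⁻¹ = u := by rw [← huz]; simp
    rw [this]
    exact interior_subset hu
  obtain ⟨Mw, hMw⟩ := hw.adm.locBdd (closure GS.V) GS.V_relCompact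
  have hMwV : ∀ u ∈ GS.V, w u ≤ Mw := fun u hu => hMw u (subset_closure hu)
  set K1 : ℝ≥0∞ := ∑ q ∈ t, ENNReal.ofReal (w q⁻¹ / Cadm) with hK1
  have hK1top : K1 ≠ ⊤ := by
    rw [hK1]
    exact (ENNReal.sum_lt_top.mpr fun q _ => ENNReal.ofReal_lt_top).ne
  refine ⟨ENNReal.ofReal (1 / Cadm) * K1 * ENNReal.ofReal Mw,
    ENNReal.mul_ne_top (ENNReal.mul_ne_top ENNReal.ofReal_ne_top hK1top)
      ENNReal.ofReal_ne_top, ?_⟩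
  intro c a hc hA
  set Fc : G → ℝ≥0∞ := fun x => ∑' m : (Λ : Set G),
      ((m : G) • GS.V).indicator (fun _ => (‖c (m : G)‖₊ : ℝ≥0∞)) x with hFcdef
  set f : G → ℝ≥0∞ := fun x => ∑' m : (Λ : Set G),
      (‖c (m : G)‖₊ : ℝ≥0∞) * ∑ q ∈ t, ((m : G) • GS.V).indicator 1 (x * q⁻¹) with hfdef
  set g : G → ℝ≥0∞ := fun y => ∑' n : (Λ : Set G),
      (‖a (n : G)‖₊ : ℝ≥0∞) * (μV⁻¹ * ((n : G) • GS.V).indicator 1 y) with hgdef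
  have hfmeas : Measurable f := by
    rw [hfdef]
    exact Measurable.ennreal_tsum fun m => (Finset.measurable_sum t fun q _ =>
      (measurable_one.indicator (hVmeas _)).comp (measurable_mul_const q⁻¹)).const_mul _
  -- (A) pointwise domination of Fc by local averages of f
  have hFcz : ∀ z : G, Fc z ≤ μV⁻¹ * ∫⁻ y in z • GS.V, f y ∂GS.μ := by
    intro z
    have hfy : ∀ y ∈ z • GS.V, Fc z ≤ f y := by
      intro y hy
      refine ENNReal.tsum_le_tsum fun m => ?_
      by_cases hzm : z ∈ (m : G) • GS.V
      · rw [Set.indicator_of_mem hzm]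
        have hyq : ∃ q ∈ t, y * q⁻¹ ∈ (m : G) • GS.V := by
          rcases hzm with ⟨v', hv', hv'z⟩
          rcases hy with ⟨v, hv, hvy⟩
          have hmem : (m : G)⁻¹ * y ∈ GS.V * GS.V := by
            rw [← hvy, ← hv'z]
            exact ⟨v', hv', v, hv, by simp [smul_eq_mul, mul_assoc]⟩
          rcases hcov _ hmem with ⟨q, hq, hmq⟩
          refine ⟨q, hq, ?_⟩
          rw [Set.mem_smul_set_iff_inv_smul_mem]
          simpa [smul_eq_mul, mul_assoc] using hmq
        rcases hyq with ⟨q, hq, hmem⟩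
        have h1le : (1 : ℝ≥0∞) ≤ ∑ q ∈ t, ((m : G) • GS.V).indicator 1 (y * q⁻¹) := by
          have := Finset.single_le_sum
            (f := fun q : G => ((m : G) • GS.V).indicator (1 : G → ℝ≥0∞) (y * q⁻¹))
            (fun i _ => zero_le) hq
          simpa only [Set.indicator_of_mem hmem, Pi.one_apply] using this
        calc (‖c (m : G)‖₊ : ℝ≥0∞) = (‖c (m : G)‖₊ : ℝ≥0∞) * 1 := (mul_one _).symm
          _ ≤ _ := mul_le_mul_right h1le _
      · rw [Set.indicator_of_notMem hzm]
        exact zero_le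
    have hint : Fc z * μV ≤ ∫⁻ y in z • GS.V, f y ∂GS.μ := by
      have h1 : ∫⁻ _ in z • GS.V, Fc z ∂GS.μ = Fc z * μV := by
        rw [setLIntegral_const, hVsmul]
      rw [← h1]
      exact setLIntegral_mono hfmeas hfy
    calc Fc z = μV⁻¹ * (Fc z * μV) := by
          rw [mul_comm (Fc z) μV, ← mul_assoc, ENNReal.inv_mul_cancel hμV0 hμVtop, one_mul]
      _ ≤ _ := mul_le_mul_right hint _
  -- (B) the convolution identity
  have hconv : ∀ x : G, convE GS f g x = ∑' n : (Λ : Set G),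
      (‖a (n : G)‖₊ : ℝ≥0∞) * (μV⁻¹ * ∫⁻ y in (x * (n : G)⁻¹) • GS.V, f y ∂GS.μ) := by
    intro x
    have hsplit : ∀ y : G, f y * g (y⁻¹ * x) = ∑' n : (Λ : Set G),
        (‖a (n : G)‖₊ : ℝ≥0∞) * μV⁻¹ * ((x * (n : G)⁻¹) • GS.V).indicator f y := by
      intro y
      rw [hgdef]
      rw [← ENNReal.tsum_mul_left]
      refine tsum_congr fun n => ?_
      by_cases hyn : y ∈ (x * (n : G)⁻¹) • GS.V
      · have hmem : y⁻¹ * x ∈ (n : G) • GS.V :=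
          (mem_inv_smul_iff_IN GS hIN (n : G) x y).mpr hyn
        rw [Set.indicator_of_mem hyn, Set.indicator_of_mem hmem]
        simp only [Pi.one_apply, mul_one]
        ring
      · have hmem : y⁻¹ * x ∉ (n : G) • GS.V := fun hmem =>
          hyn ((mem_inv_smul_iff_IN GS hIN (n : G) x y).mp hmem)
        rw [Set.indicator_of_notMem hyn, Set.indicator_of_notMem hmem]
        simp
    calc convE GS f g x = ∫⁻ y, f y * g (y⁻¹ * x) ∂GS.μ := rfl
      _ = ∫⁻ y, ∑' n : (Λ : Set G),
            (‖a (n : G)‖₊ : ℝ≥0∞) * μV⁻¹ * ((x * (n : G)⁻¹) • GS.V).indicator f y ∂GS.μ := by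
          exact lintegral_congr hsplit
      _ = ∑' n : (Λ : Set G), ∫⁻ y,
            (‖a (n : G)‖₊ : ℝ≥0∞) * μV⁻¹ * ((x * (n : G)⁻¹) • GS.V).indicator f y ∂GS.μ := by
          exact lintegral_tsum fun n =>
            ((hfmeas.indicator (hVmeas _)).const_mul _).aemeasurable
      _ = ∑' n : (Λ : Set G),
            (‖a (n : G)‖₊ : ℝ≥0∞) * (μV⁻¹ * ∫⁻ y in (x * (n : G)⁻¹) • GS.V, f y ∂GS.μ) := by
          refine tsum_congr fun n => ?_
          rw [lintegral_const_mul' _ _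
              (ENNReal.mul_ne_top ENNReal.coe_ne_top (ENNReal.inv_ne_top.mpr hμV0)),
            lintegral_indicator (hVmeas _), mul_assoc]
  -- (C) the main pointwise bound
  have hpt : ∀ x : G, (∑' l : (Λ : Set G), ((l : G) • GS.V).indicator
      (fun _ => (‖∑' m : (Λ : Set G), c (m : G) * a ((m : G)⁻¹ * (l : G))‖₊ : ℝ≥0∞)) x)
      ≤ convE GS f g x := by
    intro x
    have step1 : (∑' l : (Λ : Set G), ((l : G) • GS.V).indicator
        (fun _ => (‖∑' m : (Λ : Set G), c (m : G) * a ((m : G)⁻¹ * (l : G))‖₊ : ℝ≥0∞)) x)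
        ≤ ∑' l : (Λ : Set G), ∑' m : (Λ : Set G),
          ((‖c (m : G)‖₊ : ℝ≥0∞) * (‖a ((m : G)⁻¹ * (l : G))‖₊ : ℝ≥0∞))
            * ((l : G) • GS.V).indicator 1 x := by
      refine ENNReal.tsum_le_tsum fun l => ?_
      by_cases hxl : x ∈ (l : G) • GS.V
      · rw [Set.indicator_of_mem hxl]
        have h1 : (‖∑' m : (Λ : Set G), c (m : G) * a ((m : G)⁻¹ * (l : G))‖₊ : ℝ≥0∞)
            ≤ ∑' m : (Λ : Set G), (‖c (m : G) * a ((m : G)⁻¹ * (l : G))‖₊ : ℝ≥0∞) :=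
          enn_tsum_le _
        refine h1.trans (le_of_eq (tsum_congr fun m => ?_))
        rw [Set.indicator_of_mem hxl]
        simp [nnnorm_mul, ENNReal.coe_mul]
      · rw [Set.indicator_of_notMem hxl]
        exact zero_le
    have step2 : (∑' l : (Λ : Set G), ∑' m : (Λ : Set G),
        ((‖c (m : G)‖₊ : ℝ≥0∞) * (‖a ((m : G)⁻¹ * (l : G))‖₊ : ℝ≥0∞))
          * ((l : G) • GS.V).indicator 1 x)
        = ∑' n : (Λ : Set G), (‖a (n : G)‖₊ : ℝ≥0∞) * Fc (x * (n : G)⁻¹) := by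
      rw [ENNReal.tsum_comm]
      have hm : ∀ m : (Λ : Set G), (∑' l : (Λ : Set G),
          ((‖c (m : G)‖₊ : ℝ≥0∞) * (‖a ((m : G)⁻¹ * (l : G))‖₊ : ℝ≥0∞))
            * ((l : G) • GS.V).indicator 1 x)
          = ∑' n : (Λ : Set G), ((‖c (m : G)‖₊ : ℝ≥0∞) * (‖a (n : G)‖₊ : ℝ≥0∞))
            * ((m : G) • GS.V).indicator 1 (x * (n : G)⁻¹) := by
        intro m
        rw [← Equiv.tsum_eq (lamEquiv Λ m) (fun l : (Λ : Set G) =>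
          ((‖c (m : G)‖₊ : ℝ≥0∞) * (‖a ((m : G)⁻¹ * (l : G))‖₊ : ℝ≥0∞))
            * ((l : G) • GS.V).indicator 1 x)]
        refine tsum_congr fun n => ?_
        have hval : ((lamEquiv Λ m n : (Λ : Set G)) : G) = (m : G) * (n : G) := rfl
        rw [hval, inv_mul_cancel_left]
        congr 1
        by_cases hmem : x ∈ ((m : G) * (n : G)) • GS.V
        · rw [Set.indicator_of_mem hmem,
            Set.indicator_of_mem ((smul_mem_iff_IN GS hIN _ _ _).mp hmem)]
          rfl
        · rw [Set.indicator_of_notMem hmem, Set.indicator_of_notMem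
            (fun hmem' => hmem ((smul_mem_iff_IN GS hIN _ _ _).mpr hmem'))]
      calc (∑' m : (Λ : Set G), ∑' l : (Λ : Set G),
            ((‖c (m : G)‖₊ : ℝ≥0∞) * (‖a ((m : G)⁻¹ * (l : G))‖₊ : ℝ≥0∞))
              * ((l : G) • GS.V).indicator 1 x)
          = ∑' m : (Λ : Set G), ∑' n : (Λ : Set G),
            ((‖c (m : G)‖₊ : ℝ≥0∞) * (‖a (n : G)‖₊ : ℝ≥0∞))
              * ((m : G) • GS.V).indicator 1 (x * (n : G)⁻¹) := tsum_congr hm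
        _ = ∑' n : (Λ : Set G), ∑' m : (Λ : Set G),
            ((‖c (m : G)‖₊ : ℝ≥0∞) * (‖a (n : G)‖₊ : ℝ≥0∞))
              * ((m : G) • GS.V).indicator 1 (x * (n : G)⁻¹) := ENNReal.tsum_comm
        _ = ∑' n : (Λ : Set G), (‖a (n : G)‖₊ : ℝ≥0∞) * Fc (x * (n : G)⁻¹) := by
            refine tsum_congr fun n => ?_
            rw [hFcdef, ← ENNReal.tsum_mul_left]
            refine tsum_congr fun m => ?_
            rw [← const_mul_indicator_one (‖c (m : G)‖₊ : ℝ≥0∞) (x * (n : G)⁻¹)]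
            ring
    calc (∑' l : (Λ : Set G), ((l : G) • GS.V).indicator
        (fun _ => (‖∑' m : (Λ : Set G), c (m : G) * a ((m : G)⁻¹ * (l : G))‖₊ : ℝ≥0∞)) x)
        ≤ ∑' n : (Λ : Set G), (‖a (n : G)‖₊ : ℝ≥0∞) * Fc (x * (n : G)⁻¹) :=
          step1.trans (le_of_eq step2)
      _ ≤ ∑' n : (Λ : Set G), (‖a (n : G)‖₊ : ℝ≥0∞)
            * (μV⁻¹ * ∫⁻ y in (x * (n : G)⁻¹) • GS.V, f y ∂GS.μ) :=
          ENNReal.tsum_le_tsum fun n => mul_le_mul_right (hFcz _) _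
      _ = convE GS f g x := (hconv x).symm
  -- (D) the ℓ¹_w bound on g
  set A : ℝ≥0∞ := ∑' l : (Λ : Set G), (‖a (l : G)‖₊ : ℝ≥0∞) * ENNReal.ofReal (w (l : G))
    with hAdef
  have hgbound : L1wNorm GS w g ≤ A * ENNReal.ofReal Mw := by
    have hgle : ∀ x : G, g x * ENNReal.ofReal (w x) ≤ ∑' n : (Λ : Set G),
        (‖a (n : G)‖₊ : ℝ≥0∞) * (μV⁻¹ * (ENNReal.ofReal (w (n : G) * Mw)
          * ((n : G) • GS.V).indicator 1 x)) := by
      intro x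
      rw [hgdef, ← ENNReal.tsum_mul_right]
      refine ENNReal.tsum_le_tsum fun n => ?_
      by_cases hx : x ∈ (n : G) • GS.V
      · rw [Set.indicator_of_mem hx]
        rcases hx with ⟨v, hv, hvx⟩
        have hwx : w x ≤ w (n : G) * Mw := by
          rw [← hvx]
          exact (hw.adm.submul (n : G) v).trans
            (mul_le_mul_of_nonneg_left (hMwV v hv) (hw.adm.pos (n : G)).le)
        calc (‖a (n : G)‖₊ : ℝ≥0∞) * (μV⁻¹ * 1) * ENNReal.ofReal (w x)
            ≤ (‖a (n : G)‖₊ : ℝ≥0∞) * (μV⁻¹ * 1) * ENNReal.ofReal (w (n : G) * Mw) :=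
              mul_le_mul_right (ENNReal.ofReal_le_ofReal hwx) _
          _ = (‖a (n : G)‖₊ : ℝ≥0∞) * (μV⁻¹ * (ENNReal.ofReal (w (n : G) * Mw) * 1)) := by
              ring
      · rw [Set.indicator_of_notMem hx]
        simp
    have hmeas : ∀ n : (Λ : Set G), Measurable fun x : G =>
        (‖a (n : G)‖₊ : ℝ≥0∞) * (μV⁻¹ * (ENNReal.ofReal (w (n : G) * Mw)
          * ((n : G) • GS.V).indicator 1 x)) := fun n =>
      (((measurable_one.indicator (hVmeas _)).const_mul _).const_mul _).const_mul _
    calc L1wNorm GS w g = ∫⁻ x, g x * ENNReal.ofReal (w x) ∂GS.μ := rfl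
      _ ≤ ∫⁻ x, ∑' n : (Λ : Set G), (‖a (n : G)‖₊ : ℝ≥0∞)
            * (μV⁻¹ * (ENNReal.ofReal (w (n : G) * Mw)
              * ((n : G) • GS.V).indicator 1 x)) ∂GS.μ := lintegral_mono hgle
      _ = ∑' n : (Λ : Set G), ∫⁻ x, (‖a (n : G)‖₊ : ℝ≥0∞)
            * (μV⁻¹ * (ENNReal.ofReal (w (n : G) * Mw)
              * ((n : G) • GS.V).indicator 1 x)) ∂GS.μ :=
          lintegral_tsum fun n => (hmeas n).aemeasurable
      _ = ∑' n : (Λ : Set G), (‖a (n : G)‖₊ : ℝ≥0∞) * (μV⁻¹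
            * (ENNReal.ofReal (w (n : G) * Mw) * μV)) := by
          refine tsum_congr fun n => ?_
          have hfun : (fun x : G => (‖a (n : G)‖₊ : ℝ≥0∞) * (μV⁻¹
              * (ENNReal.ofReal (w (n : G) * Mw) * ((n : G) • GS.V).indicator 1 x)))
              = fun x : G => ((‖a (n : G)‖₊ : ℝ≥0∞) * (μV⁻¹ * ENNReal.ofReal (w (n : G) * Mw)))
                * ((n : G) • GS.V).indicator 1 x := by
            funext x; ring
          rw [hfun, lintegral_const_mul' _ _ (ENNReal.mul_ne_top ENNReal.coe_ne_top
              (ENNReal.mul_ne_top (ENNReal.inv_ne_top.mpr hμV0) ENNReal.ofReal_ne_top)),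
            lintegral_indicator_one (hVmeas _), hVsmul]
          ring
      _ = ∑' n : (Λ : Set G), ((‖a (n : G)‖₊ : ℝ≥0∞) * ENNReal.ofReal (w (n : G)))
            * ENNReal.ofReal Mw := by
          refine tsum_congr fun n => ?_
          rw [ENNReal.ofReal_mul (hw.adm.pos (n : G)).le]
          calc (‖a (n : G)‖₊ : ℝ≥0∞) * (μV⁻¹ * (ENNReal.ofReal (w (n : G))
                * ENNReal.ofReal Mw * μV))
              = (‖a (n : G)‖₊ : ℝ≥0∞) * ENNReal.ofReal (w (n : G)) * ENNReal.ofReal Mw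
                * (μV⁻¹ * μV) := by ring
            _ = _ := by rw [ENNReal.inv_mul_cancel hμV0 hμVtop, mul_one]
      _ = A * ENNReal.ofReal Mw := by rw [hAdef, ENNReal.tsum_mul_right]
  -- (E) the E-norm bound on f
  have hfsum : f = fun x => ∑ q ∈ t, Fc (x * q⁻¹) := by
    funext x
    rw [hfdef]
    calc (∑' m : (Λ : Set G), (‖c (m : G)‖₊ : ℝ≥0∞)
          * ∑ q ∈ t, ((m : G) • GS.V).indicator 1 (x * q⁻¹))
        = ∑' m : (Λ : Set G), ∑ q ∈ t, (‖c (m : G)‖₊ : ℝ≥0∞)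
            * ((m : G) • GS.V).indicator 1 (x * q⁻¹) := by
          exact tsum_congr fun m => Finset.mul_sum _ _ _
      _ = ∑ q ∈ t, ∑' m : (Λ : Set G), (‖c (m : G)‖₊ : ℝ≥0∞)
            * ((m : G) • GS.V).indicator 1 (x * q⁻¹) :=
          Summable.tsum_finsetSum fun _ _ => ENNReal.summable
      _ = ∑ q ∈ t, Fc (x * q⁻¹) := by
          refine Finset.sum_congr rfl fun q _ => ?_
          rw [hFcdef]
          exact tsum_congr fun m => const_mul_indicator_one _ _
  have hNf : E.N f ≤ K1 * E.N Fc := by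
    rw [hfsum]
    refine le_trans (N_finset_sum_le E t fun q x => Fc (x * q⁻¹)) ?_
    rw [hK1, Finset.sum_mul]
    exact Finset.sum_le_sum fun q _ => hw.transR q⁻¹ Fc
  -- (F) conclusion
  have hEdc : EdNorm GS E (Λ : Set G) (fun l => c (l : G)) = E.N Fc := rfl
  calc EdNorm GS E (Λ : Set G)
        (fun l => ∑' m : (Λ : Set G), c (m : G) * a ((m : G)⁻¹ * (l : G)))
      ≤ E.N (convE GS f g) := E.mono _ _ (Filter.Eventually.of_forall hpt)
    _ ≤ ENNReal.ofReal (1 / Cadm) * E.N f * L1wNorm GS w g := hw.convR f g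
    _ ≤ ENNReal.ofReal (1 / Cadm) * (K1 * E.N Fc) * (A * ENNReal.ofReal Mw) :=
        mul_le_mul' (mul_le_mul' le_rfl hNf) hgbound
    _ = ENNReal.ofReal (1 / Cadm) * K1 * ENNReal.ofReal Mw * E.N Fc * A := by ring
    _ = ENNReal.ofReal (1 / Cadm) * K1 * ENNReal.ofReal Mw
          * EdNorm GS E (Λ : Set G) (fun l => c (l : G)) * A := by rw [hEdc]

end CoorbitCovers
end
end
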